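/- arXiv:1802.01450 — 10 statements merged into one kernel-verified Lean document; each statement's English description precedes it below -/
import Mathlib

section
/- Let V : [0,∞) → [0,∞) be a continuous, strictly increasing bijection with V(0) = 0 such that there exist constants 0 < α ≤ ᾱ < 2, c ∈ (0,1], C̄ ≥ 1 with c λ^{α/2} V(r) ≤ V(λr) ≤ C̄ λ^{ᾱ/2} V(r) for all r > 0 and λ ≥ 1, and such that there exist α₁ > 1 and c₁ ≥ 1 with V(ηr) ≤ c₁ η^{α₁/2} V(r) for all 0 < η < 1 and 0 < r < 1. Then for every R > 0 there is a constant C, depending only on α, ᾱ, c, C̄, α₁, c₁, V(1) and R ∨ 1, such that for every 0 < r ≤ R: ∫₀^∞ min( 1/V^{-1}(√s)² , s/( V(r)² · r · V^{-1}(√s) ) ) ds ≤ C · V(r)²/r². -/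
open MeasureTheory Set

lemma lintIoc (A p T : ℝ) (hA : 0 ≤ A) (hp : -1 < p) (hT : 0 ≤ T) :
    ∫⁻ s in Set.Ioc (0:ℝ) T, ENNReal.ofReal (A * s ^ p) ≤
      ENNReal.ofReal (A * (T ^ (p+1) / (p+1))) := by
  have hint : IntegrableOn (fun s : ℝ => A * s ^ p) (Set.Ioc 0 T) := by
    have := (intervalIntegrable_iff_integrableOn_Ioc_of_le hT).1 (intervalIntegral.intervalIntegrable_rpow' hp (a := 0) (b := T))
    exact this.const_mul A
  have hnn : 0 ≤ᵐ[volume.restrict (Set.Ioc (0:ℝ) T)] fun s : ℝ => A * s ^ p := by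
    refine ae_restrict_of_forall_mem measurableSet_Ioc fun s hs => ?_
    exact mul_nonneg hA (Real.rpow_nonneg hs.1.le _)
  rw [← ofReal_integral_eq_lintegral_ofReal hint hnn]
  apply ENNReal.ofReal_le_ofReal
  rw [MeasureTheory.integral_const_mul]
  have : ∫ s in Set.Ioc (0:ℝ) T, s ^ p = T ^ (p+1) / (p+1) := by
    rw [← intervalIntegral.integral_of_le hT, integral_rpow (Or.inl hp),
      Real.zero_rpow (by linarith : p + 1 ≠ 0)]
    ring
  rw [this]

lemma lintIoi (B q T : ℝ) (hB : 0 ≤ B) (hq : q < -1) (hT : 0 < T) :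
    ∫⁻ s in Set.Ioi T, ENNReal.ofReal (B * s ^ q) ≤
      ENNReal.ofReal (B * (-T ^ (q+1) / (q+1))) := by
  have hint : IntegrableOn (fun s : ℝ => B * s ^ q) (Set.Ioi T) :=
    (integrableOn_Ioi_rpow_of_lt hq hT).const_mul B
  have hnn : 0 ≤ᵐ[volume.restrict (Set.Ioi T)] fun s : ℝ => B * s ^ q := by
    refine ae_restrict_of_forall_mem measurableSet_Ioi fun s hs => ?_
    exact mul_nonneg hB (Real.rpow_nonneg (hT.trans hs).le _)
  rw [← ofReal_integral_eq_lintegral_ofReal hint hnn]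
  apply ENNReal.ofReal_le_ofReal
  rw [MeasureTheory.integral_const_mul, integral_Ioi_rpow_of_lt hq hT]


lemma alg1 (x y z t : ℝ) (hy : y ≠ 0) (hz : z ≠ 0) (ht : t ≠ 0) :
    x * (y * y) / (y * z * t) = x / t * y / z := by
  field_simp

lemma alg2 (x y z t : ℝ) (hz : z ≠ 0) (ht : t ≠ 0) :
    x * y / (z * t) = x / t * y / z := by
  rw [div_mul_eq_mul_div, div_div, mul_comm t z]

set_option maxHeartbeats 2000000 in
/-- The integral bound behind the gradient estimate for the compensated
potential kernel: for 0 < r ≤ R,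
∫₀^∞ min(1/V⁻¹(√s)², s/(V(r)²·r·V⁻¹(√s))) ds ≤ C·V(r)²/r². -/
theorem statement3 (V Vinv : ℝ → ℝ)
    (hV0 : V 0 = 0)
    (hVcont : ContinuousOn V (Set.Ici 0))
    (hVmono : StrictMonoOn V (Set.Ici 0))
    (hVnonneg : ∀ r : ℝ, 0 ≤ r → 0 ≤ V r)
    (hVinv : ∀ r : ℝ, 0 ≤ r → Vinv (V r) = r)
    (hVinv' : ∀ s : ℝ, 0 ≤ s → 0 ≤ Vinv s ∧ V (Vinv s) = s)
    (α αbar c Cbar α₁ c₁ : ℝ)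
    (hα : 0 < α) (hααbar : α ≤ αbar) (hαbar : αbar < 2)
    (hc : 0 < c) (hc1 : c ≤ 1) (hCbar : 1 ≤ Cbar)
    (hlow : ∀ r : ℝ, 0 < r → ∀ lam : ℝ, 1 ≤ lam → c * lam ^ (α / 2) * V r ≤ V (lam * r))
    (hup : ∀ r : ℝ, 0 < r → ∀ lam : ℝ, 1 ≤ lam → V (lam * r) ≤ Cbar * lam ^ (αbar / 2) * V r)
    (hα₁ : 1 < α₁) (hc₁ : 1 ≤ c₁)
    (hloc : ∀ η r : ℝ, 0 < η → η < 1 → 0 < r → r < 1 → V (η * r) ≤ c₁ * η ^ (α₁ / 2) * V r)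
    (R : ℝ) (hR : 0 < R) :
    ∃ C : ℝ, 0 < C ∧ ∀ r : ℝ, 0 < r → r ≤ R →
      (∫⁻ s in Set.Ioi (0 : ℝ),
          ENNReal.ofReal (min ((Vinv (Real.sqrt s) ^ 2)⁻¹)
            (s / (V r ^ 2 * r * Vinv (Real.sqrt s))))) ≤
        ENNReal.ofReal (C * V r ^ 2 / r ^ 2) := by
  have hα₁0 : (0:ℝ) < α₁ := by linarith
  have hαbar0 : (0:ℝ) < αbar := lt_of_lt_of_le hα hααbar
  have hVpos : ∀ t : ℝ, 0 < t → 0 < V t := by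
    intro t ht
    have := hVmono (Set.mem_Ici.2 le_rfl) (Set.mem_Ici.2 ht.le) ht
    rwa [hV0] at this
  have hVmono' := hVmono.monotoneOn
  set Rm := max R 1 with hRmdef
  have hRm1 : (1:ℝ) ≤ Rm := le_max_right _ _
  have hRmR : R ≤ Rm := le_max_left _ _
  have hRm0 : (0:ℝ) < Rm := by linarith
  set a := α₁ / 2 with hadef
  have ha0 : 0 < a := by positivity
  -- extended local scaling up to 1
  have hloc1 : ∀ η : ℝ, 0 < η → η < 1 → V η ≤ c₁ * 2 ^ a * η ^ a * V 1 := by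
    intro η hη hη1
    have h1η : (0:ℝ) < 1 + η := by linarith
    have hη₀ : (0:ℝ) < 2 * η / (1 + η) := by positivity
    have hη₀1 : 2 * η / (1 + η) < 1 := by
      rw [div_lt_one h1η]; linarith
    have hr₀ : (0:ℝ) < (1 + η) / 2 := by positivity
    have hr₀1 : (1 + η) / 2 < 1 := by linarith
    have heq : 2 * η / (1 + η) * ((1 + η) / 2) = η := by field_simp
    have h := hloc (2 * η / (1 + η)) ((1 + η) / 2) hη₀ hη₀1 hr₀ hr₀1
    rw [heq] at h
    have h2 : (2 * η / (1 + η)) ^ a ≤ (2 * η) ^ a := by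
      apply Real.rpow_le_rpow hη₀.le _ ha0.le
      rw [div_le_iff₀ h1η]
      nlinarith
    have h3 : V ((1 + η) / 2) ≤ V 1 :=
      hVmono' (Set.mem_Ici.2 hr₀.le) (Set.mem_Ici.2 zero_le_one) hr₀1.le
    have h4 : (2 * η) ^ a = 2 ^ a * η ^ a := Real.mul_rpow (by norm_num) hη.le
    have hV1 : 0 ≤ V 1 := hVnonneg 1 zero_le_one
    have hV2 : 0 ≤ V ((1 + η) / 2) := hVnonneg _ hr₀.le
    have hc₁0 : (0:ℝ) ≤ c₁ := by linarith
    calc V η ≤ c₁ * (2 * η / (1 + η)) ^ a * V ((1 + η) / 2) := h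
      _ ≤ c₁ * (2 * η) ^ a * V ((1 + η) / 2) :=
          mul_le_mul_of_nonneg_right (mul_le_mul_of_nonneg_left h2 hc₁0) hV2
      _ ≤ c₁ * (2 * η) ^ a * V 1 := by
          apply mul_le_mul_of_nonneg_left h3
          exact mul_nonneg hc₁0 (Real.rpow_nonneg (by linarith) a)
      _ = c₁ * 2 ^ a * η ^ a * V 1 := by rw [h4]; ring
  set K := c₁ * 2 ^ a * Rm ^ a with hKdef
  have h2a : (1:ℝ) ≤ 2 ^ a := Real.one_le_rpow (by norm_num) ha0.le
  have hRma : (1:ℝ) ≤ Rm ^ a := Real.one_le_rpow hRm1 ha0.le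
  have hK1 : (1:ℝ) ≤ K := by
    calc (1:ℝ) = 1 * 1 * 1 := by ring
      _ ≤ c₁ * 2 ^ a * Rm ^ a := by
          apply mul_le_mul _ hRma zero_le_one (by positivity)
          apply mul_le_mul hc₁ h2a zero_le_one (by linarith)
  have hK0 : (0:ℝ) < K := by linarith
  -- global comparison
  have hKscale : ∀ u r : ℝ, 0 < u → u ≤ r → r ≤ R → V u ≤ K * (u / r) ^ a * V r := by
    intro u r hu hur hrR
    have hr : 0 < r := lt_of_lt_of_le hu hur
    have hVr : 0 ≤ V r := hVnonneg r hr.le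
    rcases eq_or_lt_of_le hur with h | h
    · subst h
      rw [div_self (ne_of_gt hu), Real.one_rpow]
      nlinarith [hVnonneg u hu.le]
    · have hdiv0 : 0 < u / r := div_pos hu hr
      have hdiv1 : u / r < 1 := (div_lt_one hr).2 h
      by_cases hr1 : r < 1
      · have hl := hloc (u / r) r hdiv0 hdiv1 hr hr1
        rw [div_mul_cancel₀ u (ne_of_gt hr)] at hl
        calc V u ≤ c₁ * (u / r) ^ a * V r := hl
          _ ≤ K * (u / r) ^ a * V r := by
              apply mul_le_mul_of_nonneg_right _ hVr
              apply mul_le_mul_of_nonneg_right _ (Real.rpow_nonneg hdiv0.le a)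
              have h8 : c₁ * 1 ≤ c₁ * 2 ^ a := mul_le_mul_of_nonneg_left h2a (by linarith)
              have h9 : c₁ * 2 ^ a * 1 ≤ c₁ * 2 ^ a * Rm ^ a :=
                mul_le_mul_of_nonneg_left hRma
                  (mul_nonneg (by linarith) (Real.rpow_nonneg (by norm_num) a))
              rw [hKdef]; linarith
      · push_neg at hr1
        by_cases hu1 : u < 1
        · have hl := hloc1 u hu hu1
          have hV1r : V 1 ≤ V r := hVmono' (Set.mem_Ici.2 zero_le_one)
            (Set.mem_Ici.2 hr.le) hr1
          have hua : u ^ a = (u / r) ^ a * r ^ a := by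
            rw [← Real.mul_rpow (le_of_lt hdiv0) hr.le, div_mul_cancel₀ u (ne_of_gt hr)]
          have hra : r ^ a ≤ Rm ^ a := Real.rpow_le_rpow hr.le (le_trans hrR hRmR) ha0.le
          have hV10 : 0 ≤ V 1 := hVnonneg 1 zero_le_one
          calc V u ≤ c₁ * 2 ^ a * u ^ a * V 1 := hl
            _ = c₁ * 2 ^ a * ((u / r) ^ a * r ^ a) * V 1 := by rw [hua]
            _ ≤ c₁ * 2 ^ a * ((u / r) ^ a * Rm ^ a) * V r := by
                apply mul_le_mul _ hV1r hV10 (by positivity)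
                apply mul_le_mul_of_nonneg_left _ (by positivity)
                exact mul_le_mul_of_nonneg_left hra (Real.rpow_nonneg hdiv0.le a)
            _ = K * (u / r) ^ a * V r := by rw [hKdef]; ring
        · push_neg at hu1
          have hVur : V u ≤ V r := hVmono' (Set.mem_Ici.2 hu.le) (Set.mem_Ici.2 hr.le) h.le
          have hIR : 1 / Rm ≤ u / r := by
            rw [div_le_div_iff₀ hRm0 hr]
            nlinarith
          have h5 : (1 / Rm) ^ a ≤ (u / r) ^ a :=
            Real.rpow_le_rpow (by positivity) hIR ha0.le
          have h6 : (1 / Rm : ℝ) ^ a = (Rm ^ a)⁻¹ := by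
            rw [one_div, Real.inv_rpow hRm0.le]
          have h7 : (1:ℝ) ≤ K * (u / r) ^ a := by
            have hRmane : (Rm:ℝ) ^ a ≠ 0 := ne_of_gt (Real.rpow_pos_of_pos hRm0 a)
            have heq2 : K * (Rm ^ a)⁻¹ = c₁ * 2 ^ a := by
              rw [hKdef]; field_simp
            have h10 : (1:ℝ) ≤ K * (Rm ^ a)⁻¹ := by
              rw [heq2]; nlinarith
            calc (1:ℝ) ≤ K * (Rm ^ a)⁻¹ := h10
              _ ≤ K * (u / r) ^ a := by
                  apply mul_le_mul_of_nonneg_left _ hK0.le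
                  rw [← h6]; exact h5
          calc V u ≤ V r := hVur
            _ = 1 * V r := by ring
            _ ≤ K * (u / r) ^ a * V r := mul_le_mul_of_nonneg_right h7 hVr
  -- constants
  set e := 2 / α₁ with hedef
  have he0 : 0 < e := by positivity
  have hae : a * e = 1 := by rw [hadef, hedef]; field_simp
  set p := 1 - 1 / α₁ with hpdef
  have hp0 : 0 < p := by
    rw [hpdef]; have : 1 / α₁ < 1 := by rw [div_lt_one hα₁0]; linarith
    linarith
  have hp1 : p + 1 = 2 - 1 / α₁ := by rw [hpdef]; ring
  have hp1pos : 0 < p + 1 := by linarith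
  set b := αbar / 2 with hbdef
  have hb0 : 0 < b := by positivity
  set f := 4 / αbar with hfdef
  set e₂ := 2 / αbar with he₂def
  have he₂0 : 0 < e₂ := by positivity
  have he₂1 : 1 < e₂ := by rw [he₂def, lt_div_iff₀ hαbar0]; linarith
  have hbe₂ : b * e₂ = 1 := by rw [hbdef, he₂def]; field_simp
  set q := -(2 / αbar) with hqdef
  have hq : q < -1 := by rw [hqdef]; rw [he₂def] at he₂1; linarith
  set C₁ := K ^ e / (p + 1) with hC₁def
  set C₂ := Cbar ^ f / (e₂ - 1) with hC₂def
  have hCbar0 : (0:ℝ) < Cbar := by linarith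
  have hC₁0 : 0 < C₁ := div_pos (Real.rpow_pos_of_pos hK0 e) hp1pos
  have hC₂0 : 0 < C₂ := div_pos (Real.rpow_pos_of_pos hCbar0 f) (by linarith)
  clear_value Rm a K e p b f e₂ q C₁ C₂
  refine ⟨C₁ + C₂, by linarith, ?_⟩
  intro r hr hrR
  set w := V r with hwdef
  have hw : 0 < w := hVpos r hr
  set T := w ^ 2 with hTdef
  have hT0 : 0 < T := by positivity
  set A := (K * w) ^ e / (w ^ 2 * r ^ 2) with hAdef
  have hA0 : 0 < A := by positivity
  set B := (Cbar * w) ^ f / r ^ 2 with hBdef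
  have hB0 : 0 < B := by positivity
  clear_value A B
  -- pointwise bound on Ioc 0 T
  have key1 : ∀ s ∈ Set.Ioc (0:ℝ) T,
      ENNReal.ofReal (min ((Vinv (Real.sqrt s) ^ 2)⁻¹)
        (s / (V r ^ 2 * r * Vinv (Real.sqrt s)))) ≤ ENNReal.ofReal (A * s ^ p) := by
    intro s hs
    obtain ⟨hs0, hsT⟩ := hs
    apply ENNReal.ofReal_le_ofReal
    set sq := Real.sqrt s with hsqdef
    have hsq0 : 0 < sq := Real.sqrt_pos.2 hs0
    obtain ⟨hu0, hVu⟩ := hVinv' sq hsq0.le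
    set u := Vinv sq with hudef
    have hupos : 0 < u := by
      rcases eq_or_lt_of_le hu0 with h | h
      · exfalso; rw [← h] at hVu; rw [hV0] at hVu; linarith
      · exact h
    have hsqw : sq ≤ w := by
      rw [hsqdef, hTdef] at *
      calc Real.sqrt s ≤ Real.sqrt (w ^ 2) := Real.sqrt_le_sqrt hsT
        _ = w := Real.sqrt_sq hw.le
    have hur : u ≤ r := by
      by_contra hcon
      push_neg at hcon
      have := hVmono (Set.mem_Ici.2 hr.le) (Set.mem_Ici.2 hu0) hcon
      rw [hVu] at this
      rw [← hwdef] at this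
      linarith
    have hscale := hKscale u r hupos hur hrR
    rw [hVu, ← hwdef] at hscale
    -- lower bound on u
    set d := (sq / (K * w)) ^ e with hddef
    have hd0 : 0 < d := Real.rpow_pos_of_pos (by positivity) e
    have hrd : r * d ≤ u := by
      have h1 : sq / (K * w) ≤ (u / r) ^ a := by
        rw [div_le_iff₀ (by positivity)]
        calc sq ≤ K * (u / r) ^ a * w := hscale
          _ = (u / r) ^ a * (K * w) := by ring
      have h2 : d ≤ u / r := by
        calc d ≤ ((u / r) ^ a) ^ e := Real.rpow_le_rpow (by positivity) h1 he0.le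
          _ = (u / r) ^ (a * e) := (Real.rpow_mul (by positivity) a e).symm
          _ = u / r := by rw [hae, Real.rpow_one]
      calc r * d ≤ r * (u / r) := mul_le_mul_of_nonneg_left h2 hr.le
        _ = u := by field_simp
    have hmin : min ((Vinv (Real.sqrt s) ^ 2)⁻¹) (s / (V r ^ 2 * r * Vinv (Real.sqrt s)))
        ≤ s / (w ^ 2 * r * (r * d)) := by
      apply le_trans (min_le_right _ _)
      rw [← hsqdef, ← hudef, ← hwdef]
      gcongr
      all_goals exact hrd
    apply le_trans hmin
    -- now show equality of the bound
    have hsqe : sq ^ e = s ^ (1 / α₁) := by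
      rw [hsqdef, Real.sqrt_eq_rpow, ← Real.rpow_mul hs0.le]
      congr 1
      rw [hedef]; ring
    have hde : d = s ^ (1 / α₁) / (K * w) ^ e := by
      rw [hddef, Real.div_rpow hsq0.le (by positivity), hsqe]
    have hKw : (0:ℝ) < (K * w) ^ e := Real.rpow_pos_of_pos (by positivity) e
    have hs1α : (0:ℝ) < s ^ (1 / α₁) := Real.rpow_pos_of_pos hs0 _
    have hsp : s ^ p = s / s ^ (1 / α₁) := by
      rw [hpdef, Real.rpow_sub hs0, Real.rpow_one]
    have heqf : s / (w ^ 2 * r * (r * d)) = A * s ^ p := by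
      rw [hde, hAdef, hsp]
      field_simp
    exact le_of_eq heqf
  -- pointwise bound on Ioi T
  have key2 : ∀ s ∈ Set.Ioi T,
      ENNReal.ofReal (min ((Vinv (Real.sqrt s) ^ 2)⁻¹)
        (s / (V r ^ 2 * r * Vinv (Real.sqrt s)))) ≤ ENNReal.ofReal (B * s ^ q) := by
    intro s hs
    rw [Set.mem_Ioi] at hs
    have hs0 : 0 < s := hT0.trans hs
    apply ENNReal.ofReal_le_ofReal
    set sq := Real.sqrt s with hsqdef
    have hsq0 : 0 < sq := Real.sqrt_pos.2 hs0
    obtain ⟨hu0, hVu⟩ := hVinv' sq hsq0.le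
    set u := Vinv sq with hudef
    have hsqw : w < sq := by
      rw [hsqdef, hTdef] at *
      calc w = Real.sqrt (w ^ 2) := (Real.sqrt_sq hw.le).symm
        _ < Real.sqrt s := Real.sqrt_lt_sqrt (by positivity) hs
    have hru : r < u := by
      by_contra hcon
      push_neg at hcon
      have := hVmono' (Set.mem_Ici.2 hu0) (Set.mem_Ici.2 hr.le) hcon
      rw [hVu, ← hwdef] at this
      linarith
    have hupos : 0 < u := hr.trans hru
    have hlam : (1:ℝ) ≤ u / r := (one_le_div hr).2 hru.le
    have hscale := hup r hr (u / r) hlam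
    rw [div_mul_cancel₀ u (ne_of_gt hr), hVu, ← hwdef] at hscale
    set d := (sq / (Cbar * w)) ^ e₂ with hddef
    have hd0 : 0 < d := Real.rpow_pos_of_pos (by positivity) e₂
    have hrd : r * d ≤ u := by
      have h1 : sq / (Cbar * w) ≤ (u / r) ^ b := by
        rw [div_le_iff₀ (by positivity)]
        calc sq ≤ Cbar * (u / r) ^ b * w := hscale
          _ = (u / r) ^ b * (Cbar * w) := by ring
      have h2 : d ≤ u / r := by
        calc d ≤ ((u / r) ^ b) ^ e₂ := Real.rpow_le_rpow (by positivity) h1 he₂0.le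
          _ = (u / r) ^ (b * e₂) := (Real.rpow_mul (by positivity) b e₂).symm
          _ = u / r := by rw [hbe₂, Real.rpow_one]
      calc r * d ≤ r * (u / r) := mul_le_mul_of_nonneg_left h2 hr.le
        _ = u := by field_simp
    have hmin : min ((Vinv (Real.sqrt s) ^ 2)⁻¹) (s / (V r ^ 2 * r * Vinv (Real.sqrt s)))
        ≤ ((r * d) ^ 2)⁻¹ := by
      apply le_trans (min_le_left _ _)
      rw [← hsqdef, ← hudef]
      gcongr
      all_goals exact hrd
    apply le_trans hmin
    -- equality computation
    have hd2 : d ^ 2 = s ^ e₂ / (Cbar * w) ^ f := by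
      rw [hddef, ← Real.rpow_natCast ((sq / (Cbar * w)) ^ e₂) 2,
        ← Real.rpow_mul (by positivity)]
      have : e₂ * (2:ℕ) = f := by rw [he₂def, hfdef]; push_cast; ring
      rw [this, Real.div_rpow hsq0.le (by positivity)]
      congr 1
      rw [hsqdef, Real.sqrt_eq_rpow, ← Real.rpow_mul hs0.le]
      congr 1
      rw [hfdef, he₂def]; ring
    have hsq2 : s ^ q = (s ^ e₂)⁻¹ := by
      rw [hqdef, ← he₂def, Real.rpow_neg hs0.le]
    have hse₂ : (0:ℝ) < s ^ e₂ := Real.rpow_pos_of_pos hs0 _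
    have hCwf : (0:ℝ) < (Cbar * w) ^ f := Real.rpow_pos_of_pos (by positivity) f
    rw [hBdef, hsq2]
    rw [mul_pow, hd2]
    rw [inv_le_iff_one_le_mul₀ (by positivity)]
    have hgoal : (Cbar * w) ^ f / r ^ 2 * (s ^ e₂)⁻¹ * (r ^ 2 * (s ^ e₂ / (Cbar * w) ^ f)) = 1 := by
      field_simp
    rw [hgoal]
  -- combine
  have hsplit : Set.Ioi (0:ℝ) = Set.Ioc 0 T ∪ Set.Ioi T := (Set.Ioc_union_Ioi_eq_Ioi hT0.le).symm
  rw [hsplit, lintegral_union measurableSet_Ioi Set.Ioc_disjoint_Ioi_same]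
  have hI1 : (∫⁻ s in Set.Ioc (0:ℝ) T,
      ENNReal.ofReal (min ((Vinv (Real.sqrt s) ^ 2)⁻¹)
        (s / (V r ^ 2 * r * Vinv (Real.sqrt s))))) ≤ ENNReal.ofReal (A * (T ^ (p+1) / (p+1))) :=
    le_trans (setLIntegral_mono' measurableSet_Ioc key1) (lintIoc A p T hA0.le (by linarith) hT0.le)
  have hI2 : (∫⁻ s in Set.Ioi T,
      ENNReal.ofReal (min ((Vinv (Real.sqrt s) ^ 2)⁻¹)
        (s / (V r ^ 2 * r * Vinv (Real.sqrt s))))) ≤ ENNReal.ofReal (B * (-T ^ (q+1) / (q+1))) :=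
    le_trans (setLIntegral_mono' measurableSet_Ioi key2) (lintIoi B q T hB0.le hq hT0)
  apply le_trans (add_le_add hI1 hI2)
  -- final real computation
  have hv1 : A * (T ^ (p+1) / (p+1)) = C₁ * w ^ 2 / r ^ 2 := by
    have hTp : (T:ℝ) ^ (p+1) = w ^ ((2:ℝ) * (p+1)) := by
      rw [hTdef, ← Real.rpow_natCast w 2, ← Real.rpow_mul hw.le]
      norm_num
    have hKwe : (K * w) ^ e = K ^ e * w ^ e := Real.mul_rpow hK0.le hw.le
    have hcomb : w ^ e * w ^ ((2:ℝ) * (p+1)) = w ^ 2 * w ^ 2 := by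
      rw [← Real.rpow_add hw]
      have h1 : e + 2 * (p + 1) = ((4:ℕ):ℝ) := by
        rw [hedef, hpdef]; push_cast; field_simp; ring
      rw [h1, Real.rpow_natCast]
      ring
    calc A * (T ^ (p+1) / (p+1))
        = K ^ e * (w ^ e * w ^ ((2:ℝ) * (p+1))) / (w ^ 2 * r ^ 2 * (p+1)) := by
          rw [hAdef, hTp, hKwe, div_mul_div_comm, mul_assoc]
      _ = K ^ e * (w ^ 2 * w ^ 2) / (w ^ 2 * r ^ 2 * (p+1)) := by rw [hcomb]
      _ = K ^ e / (p + 1) * (w ^ 2) / (r ^ 2) := by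
          have : (w:ℝ) ^ 2 * r ^ 2 * (p + 1) = (w ^ 2) * (r ^ 2) * (p + 1) := by ring
          rw [this]
          exact alg1 (K ^ e) (w ^ 2) (r ^ 2) (p + 1) (by positivity) (by positivity)
            (ne_of_gt hp1pos)
      _ = C₁ * w ^ 2 / r ^ 2 := by rw [hC₁def]
  have hv2 : B * (-T ^ (q+1) / (q+1)) = C₂ * w ^ 2 / r ^ 2 := by
    have hTq : (T:ℝ) ^ (q+1) = w ^ ((2:ℝ) * (q+1)) := by
      rw [hTdef, ← Real.rpow_natCast w 2, ← Real.rpow_mul hw.le]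
      norm_num
    have hCwf : (Cbar * w) ^ f = Cbar ^ f * w ^ f := Real.mul_rpow hCbar0.le hw.le
    have hcomb : w ^ f * w ^ ((2:ℝ) * (q+1)) = w ^ 2 := by
      rw [← Real.rpow_add hw]
      have h1 : f + 2 * (q + 1) = ((2:ℕ):ℝ) := by
        rw [hfdef, hqdef]; push_cast; field_simp; ring
      rw [h1, Real.rpow_natCast]
    have hq1 : q + 1 = -(e₂ - 1) := by rw [hqdef, he₂def]; ring
    have hneg : -T ^ (q+1) / (q+1) = T ^ (q+1) / (e₂ - 1) := by
      rw [hq1, div_neg, neg_div, neg_neg]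
    calc B * (-T ^ (q+1) / (q+1))
        = Cbar ^ f * (w ^ f * w ^ ((2:ℝ) * (q+1))) / (r ^ 2 * (e₂ - 1)) := by
          rw [hBdef, hCwf, hneg, hTq, div_mul_div_comm, mul_assoc]
      _ = Cbar ^ f * w ^ 2 / (r ^ 2 * (e₂ - 1)) := by rw [hcomb]
      _ = Cbar ^ f / (e₂ - 1) * (w ^ 2) / (r ^ 2) :=
          alg2 (Cbar ^ f) (w ^ 2) (r ^ 2) (e₂ - 1) (by positivity) (by linarith)
      _ = C₂ * w ^ 2 / r ^ 2 := by rw [hC₂def]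
  rw [hv1, hv2, ← ENNReal.ofReal_add (by positivity) (by positivity)]
  apply ENNReal.ofReal_le_ofReal
  apply le_of_eq
  rw [hTdef]
  ring
end

section
/- Let V : [0,∞) → [0,∞) be a continuous, strictly increasing, subadditive bijection with V(0) = 0 such that c λ^{α/2} V(r) ≤ V(λr) ≤ C̄ λ^{ᾱ/2} V(r) for all r > 0 and λ ≥ 1, where 0 < α ≤ ᾱ < 2, c ∈ (0,1], C̄ ≥ 1. Then there is a constant C, depending only on α, ᾱ, c, C̄, such that for all a, b, r > 0 with |a − b| ≤ r: C⁻¹ min( (ab)^{-1/2}, 1/r ) ≤ min( 1/V^{-1}( √(V(a)V(b)) ), 1/r ) ≤ C min( (ab)^{-1/2}, 1/r ). -/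
private lemma minlem (x y r : ℝ) (hx : 0 < x) (hy : 0 < y) (hr : 0 < r)
    (h : y ≤ x + r) : min x⁻¹ r⁻¹ ≤ 2 * min y⁻¹ r⁻¹ := by
  rcases le_total y r with hyr | hyr
  · have h1 : min y⁻¹ r⁻¹ = r⁻¹ := min_eq_right (by
      exact inv_anti₀ hy hyr)
    rw [h1]
    have : min x⁻¹ r⁻¹ ≤ r⁻¹ := min_le_right _ _
    have : (0:ℝ) < r⁻¹ := by positivity
    linarith [min_le_right x⁻¹ r⁻¹]
  · have h1 : min y⁻¹ r⁻¹ = y⁻¹ := min_eq_left (by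
      exact inv_anti₀ hr hyr)
    rw [h1]
    rcases le_total x r with hxr | hxr
    · have hmin : min x⁻¹ r⁻¹ ≤ r⁻¹ := min_le_right _ _
      have h2 : y ≤ 2 * r := by linarith
      have h3 : r⁻¹ ≤ 2 * y⁻¹ := by
        rw [inv_le_iff_one_le_mul₀ hr]
        have : y * y⁻¹ = 1 := mul_inv_cancel₀ (ne_of_gt hy)
        nlinarith [inv_pos.mpr hy]
      linarith
    · have hmin : min x⁻¹ r⁻¹ ≤ x⁻¹ := min_le_left _ _
      have h2 : y ≤ 2 * x := by linarith
      have h3 : x⁻¹ ≤ 2 * y⁻¹ := by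
        rw [inv_le_iff_one_le_mul₀ hx]
        have : y * y⁻¹ = 1 := mul_inv_cancel₀ (ne_of_gt hy)
        nlinarith [inv_pos.mpr hy]
      linarith

private lemma helper (V Vinv : ℝ → ℝ)
    (hVmono : StrictMonoOn V (Set.Ici 0))
    (hVnonneg : ∀ r : ℝ, 0 ≤ r → 0 ≤ V r)
    (hVinv' : ∀ s : ℝ, 0 ≤ s → 0 ≤ Vinv s ∧ V (Vinv s) = s)
    (a b r : ℝ) (ha : 0 < a) (hb : 0 < b) (hr : 0 < r)
    (hab : a ≤ b) (habr : b - a ≤ r) :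
    (2:ℝ)⁻¹ * min (Real.sqrt (a * b))⁻¹ r⁻¹ ≤
        min (Vinv (Real.sqrt (V a * V b)))⁻¹ r⁻¹ ∧
      min (Vinv (Real.sqrt (V a * V b)))⁻¹ r⁻¹ ≤ 2 * min (Real.sqrt (a * b))⁻¹ r⁻¹ := by
  have ha0 : (0:ℝ) ≤ a := ha.le
  have hb0 : (0:ℝ) ≤ b := hb.le
  have haI : a ∈ Set.Ici (0:ℝ) := ha0
  have hbI : b ∈ Set.Ici (0:ℝ) := hb0
  have hVa : 0 ≤ V a := hVnonneg a ha0
  have hVab : V a ≤ V b := hVmono.monotoneOn haI hbI hab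
  set s := Real.sqrt (V a * V b) with hs
  set w := Vinv s with hwdef
  obtain ⟨hw0, hws⟩ := hVinv' s (Real.sqrt_nonneg _)
  have hwI : w ∈ Set.Ici (0:ℝ) := hw0
  -- V a ≤ s ≤ V b
  have hs1 : V a ≤ s := by
    have := Real.sqrt_le_sqrt (mul_le_mul_of_nonneg_left hVab hVa)
    rwa [Real.sqrt_mul_self hVa] at this
  have hs2 : s ≤ V b := by
    have hVb : 0 ≤ V b := hVnonneg b hb0
    have := Real.sqrt_le_sqrt (mul_le_mul_of_nonneg_right hVab hVb)
    rwa [Real.sqrt_mul_self hVb] at this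
  -- a ≤ w ≤ b
  have haw : a ≤ w := by
    by_contra h
    push_neg at h
    have := hVmono hwI haI h
    rw [hws] at this
    linarith
  have hwb : w ≤ b := by
    by_contra h
    push_neg at h
    have := hVmono hbI hwI h
    rw [hws] at this
    linarith
  have hwpos : 0 < w := lt_of_lt_of_le ha haw
  -- a ≤ √(ab) ≤ b
  set g := Real.sqrt (a * b) with hg
  have hag : a ≤ g := by
    have := Real.sqrt_le_sqrt (mul_le_mul_of_nonneg_left hab ha0)
    rwa [Real.sqrt_mul_self ha0] at this
  have hgb : g ≤ b := by
    have := Real.sqrt_le_sqrt (mul_le_mul_of_nonneg_right hab hb0)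
    rwa [Real.sqrt_mul_self hb0] at this
  have hgpos : 0 < g := lt_of_lt_of_le ha hag
  constructor
  · have := minlem g w r hgpos hwpos hr (by linarith)
    linarith
  · have := minlem w g r hwpos hgpos hr (by linarith)
    linarith

/-- For a subadditive V with global two-sided scaling,
min(1/V⁻¹(√(V(a)V(b))), 1/r) is comparable to min(1/√(ab), 1/r) whenever |a−b| ≤ r. -/
theorem statement5 (V Vinv : ℝ → ℝ)
    (hV0 : V 0 = 0)
    (hVcont : ContinuousOn V (Set.Ici 0))
    (hVmono : StrictMonoOn V (Set.Ici 0))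
    (hVnonneg : ∀ r : ℝ, 0 ≤ r → 0 ≤ V r)
    (hVsub : ∀ s t : ℝ, 0 ≤ s → 0 ≤ t → V (s + t) ≤ V s + V t)
    (hVinv : ∀ r : ℝ, 0 ≤ r → Vinv (V r) = r)
    (hVinv' : ∀ s : ℝ, 0 ≤ s → 0 ≤ Vinv s ∧ V (Vinv s) = s)
    (α αbar c Cbar : ℝ)
    (hα : 0 < α) (hααbar : α ≤ αbar) (hαbar : αbar < 2)
    (hc : 0 < c) (hc1 : c ≤ 1) (hCbar : 1 ≤ Cbar)
    (hlow : ∀ r : ℝ, 0 < r → ∀ lam : ℝ, 1 ≤ lam → c * lam ^ (α / 2) * V r ≤ V (lam * r))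
    (hup : ∀ r : ℝ, 0 < r → ∀ lam : ℝ, 1 ≤ lam → V (lam * r) ≤ Cbar * lam ^ (αbar / 2) * V r) :
    ∃ C : ℝ, 0 < C ∧ ∀ a b r : ℝ, 0 < a → 0 < b → 0 < r → |a - b| ≤ r →
      C⁻¹ * min (Real.sqrt (a * b))⁻¹ r⁻¹ ≤
          min (Vinv (Real.sqrt (V a * V b)))⁻¹ r⁻¹ ∧
        min (Vinv (Real.sqrt (V a * V b)))⁻¹ r⁻¹ ≤ C * min (Real.sqrt (a * b))⁻¹ r⁻¹ := by
  refine ⟨2, by norm_num, ?_⟩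
  intro a b r ha hb hr habr
  rw [abs_le] at habr
  rcases le_total a b with hab | hab
  · exact helper V Vinv hVmono hVnonneg hVinv' a b r ha hb hr hab (by linarith [habr.1])
  · rw [mul_comm a b, mul_comm (V a) (V b)]
    exact helper V Vinv hVmono hVnonneg hVinv' b a r hb ha hr hab (by linarith [habr.2])
end

section
/- Let D ⊂ ℝ be a finite union of k ≥ 1 disjoint bounded open intervals, each of length at least r₀ and with the distance between any two of them at least r₀, and let d = diam(D) < ∞. Let V : [0,∞) → [0,∞) be a continuous, strictly increasing bijection with V(0)=0 satisfying c λ^{α/2} V(r) ≤ V(λr) ≤ C̄ λ^{ᾱ/2} V(r) for all r > 0, λ ≥ 1 (0 < α ≤ ᾱ < 2), and V(ηr) ≤ c₁ η^{α₁/2} V(r) for all 0 < η < 1, 0 < r < 1 ∨ d, with α₁ > 1. Then there is a constant C, depending only on the scaling constants, d/r₀ and 1 ∨ d, such that for every x ∈ D: ∫_ℝ [ V(|x−z|)² / ( |x−z|² · V(dist(z, ∂D)) ) ] dz ≤ C · V(δ_x)/δ_x, where δ_x = dist(x, Dᶜ). -/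
/-!
Write `r = |x - z|`, `s = dist(z, ∂D)`, `δ = dist(x, Dᶜ)` and `R = δ / 2`; since `∂D ⊆ Dᶜ`,
`δ ≤ s + r`. The integrand `V(r)² / (r² V(s))` is dominated region by region:
* for `r < R` we have `s ≥ R`, and the local lower scaling `V(r) ≤ c₁ (r/R)^{α₁/2} V(R)` gives a
  bound `≲ (V(R)/R²) (r/R)^{α₁-2}`, integrable at `0` because `α₁ > 1`;
* for `r ≥ R` and `s ≥ r/2`, the upper scaling gives `≲ (V(R)/R²) (r/R)^{ᾱ/2-2}`, integrable at
  `∞` because `ᾱ < 2`;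
* for `s < r/2`, let `w ∈ ∂D` be nearest to `z`; then `ρ = |x - w|` is comparable to `r`, and the
  upper scaling between `s` and `ρ` gives `≲ (V(ρ)/ρ²) (s/ρ)^{-ᾱ/2}`, integrable near `w`.
The three contributions are multiples of `V(R)/R` and of `V(ρ)/ρ` for the finitely many `w ∈ ∂D`,
and `ρ ≥ δ`; as `ᾱ ≤ 2`, `t ↦ V(t)/t` is almost decreasing, so all of them are `≲ V(δ)/δ`.
-/

open MeasureTheory Metric Set

def UpperScaling (V : ℝ → ℝ) (C β : ℝ) : Prop :=
  ∀ r : ℝ, 0 < r → ∀ lam : ℝ, 1 ≤ lam → V (lam * r) ≤ C * lam ^ β * V r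

namespace UpperScaling

variable {V : ℝ → ℝ} {C β a b : ℝ}

lemma le_mul_div_rpow (hV : UpperScaling V C β) (ha : 0 < a) (hab : a ≤ b) :
    V b ≤ C * (b / a) ^ β * V a := by
  simpa [div_mul_cancel₀ b ha.ne'] using hV a ha (b / a) ((one_le_div ha).mpr hab)

lemma le_mul_div (hV : UpperScaling V C β) (hβ : β ≤ 1) (hC : 0 ≤ C) (hVa : 0 ≤ V a)
    (ha : 0 < a) (hab : a ≤ b) : V b ≤ C * (b / a) * V a :=
  (hV.le_mul_div_rpow ha hab).trans <| by
    gcongr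
    exact Real.rpow_le_self_of_one_le ((one_le_div ha).mpr hab) hβ

lemma le_two_mul (hV : UpperScaling V C β) (hβ : β ≤ 1) (hC : 0 ≤ C) (hVa : 0 ≤ V a)
    (ha : 0 < a) (hab : a ≤ b) (hb : b ≤ 2 * a) : V b ≤ 2 * C * V a := by
  have : b / a ≤ 2 := (div_le_iff₀ ha).mpr hb
  calc V b ≤ C * (b / a) * V a := hV.le_mul_div hβ hC hVa ha hab
    _ ≤ C * 2 * V a := by gcongr
    _ = 2 * C * V a := by ring

lemma div_le_mul_div (hV : UpperScaling V C β) (hβ : β ≤ 1) (hC : 0 ≤ C) (hVa : 0 ≤ V a)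
    (ha : 0 < a) (hab : a ≤ b) : V b / b ≤ C * (V a / a) := by
  have hb : 0 < b := ha.trans_le hab
  rw [div_le_iff₀ hb]
  calc V b ≤ C * (b / a) * V a := hV.le_mul_div hβ hC hVa ha hab
    _ = C * (V a / a) * b := by field_simp

end UpperScaling

lemma integrable_comp_abs {f : ℝ → ℝ} (hf : IntegrableOn f (Ioi 0)) :
    Integrable fun x => f |x| := by
  have hIoi : IntegrableOn (fun x => f |x|) (Ioi 0) :=
    hf.congr_fun (fun x hx => by rw [abs_of_pos hx]) measurableSet_Ioi
  have hIic : IntegrableOn (fun x => f |x|) (Iic 0) := by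
    have hneg : MeasurableEmbedding fun x : ℝ => -x := (Homeomorph.neg ℝ).measurableEmbedding
    rw [← Measure.map_neg_eq_self (volume : Measure ℝ), hneg.integrableOn_map_iff]
    simp_rw [Function.comp_def, abs_neg, neg_preimage, neg_Iic, neg_zero]
    exact Iff.mpr integrableOn_Ici_iff_integrableOn_Ioi hIoi
  simpa [Iic_union_Ioi] using hIic.union hIoi

lemma integral_comp_abs_sub (f : ℝ → ℝ) (a : ℝ) :
    ∫ z, f |z - a| = 2 * ∫ t in Ioi 0, f t := by
  rw [integral_sub_right_eq_self (fun z => f |z|) a, integral_comp_abs]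

noncomputable def nearProfile (L β : ℝ) : ℝ → ℝ := (Ioo 0 L).indicator fun t => (t / L) ^ β

noncomputable def farProfile (L β : ℝ) : ℝ → ℝ := (Ici L).indicator fun t => (t / L) ^ β

lemma nearProfile_nonneg (L β t : ℝ) : 0 ≤ nearProfile L β t :=
  indicator_nonneg (fun _ ht => Real.rpow_nonneg (div_nonneg ht.1.le (ht.1.trans ht.2).le) _) t

lemma farProfile_nonneg {L : ℝ} (hL : 0 ≤ L) (β t : ℝ) : 0 ≤ farProfile L β t :=
  indicator_nonneg (fun _ ht => Real.rpow_nonneg (div_nonneg (hL.trans ht) hL) _) t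

lemma eqOn_div_rpow {L : ℝ} (hL : 0 < L) (β : ℝ) :
    EqOn (fun t => (t / L) ^ β) (fun t => t ^ β / L ^ β) (Ici 0) :=
  fun _ ht => Real.div_rpow ht hL.le β

lemma integrableOn_Ioo_div_rpow {L β : ℝ} (hL : 0 < L) (hβ : -1 < β) :
    IntegrableOn (fun t => (t / L) ^ β) (Ioo 0 L) := by
  have h : IntegrableOn (fun t : ℝ => t ^ β) (Ioc 0 L) :=
    (intervalIntegrable_iff_integrableOn_Ioc_of_le hL.le).mp
      (intervalIntegral.intervalIntegrable_rpow' hβ)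
  exact IntegrableOn.congr_fun ((h.mono_set Ioo_subset_Ioc_self).div_const _)
    ((eqOn_div_rpow hL β).mono fun _ ht => ht.1.le).symm measurableSet_Ioo

lemma integral_Ioo_div_rpow {L β : ℝ} (hL : 0 < L) (hβ : -1 < β) :
    ∫ t in Ioo 0 L, (t / L) ^ β = L / (β + 1) := by
  rw [setIntegral_congr_fun measurableSet_Ioo ((eqOn_div_rpow hL β).mono fun _ ht => ht.1.le),
    integral_div, ← integral_Ioc_eq_integral_Ioo, ← intervalIntegral.integral_of_le hL.le,
    integral_rpow (Or.inl hβ), Real.zero_rpow (by linarith), sub_zero, Real.rpow_add_one hL.ne']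
  field_simp

lemma integrableOn_Ioi_div_rpow {L β : ℝ} (hL : 0 < L) (hβ : β < -1) :
    IntegrableOn (fun t => (t / L) ^ β) (Ioi L) :=
  IntegrableOn.congr_fun ((integrableOn_Ioi_rpow_of_lt hβ hL).div_const _)
    ((eqOn_div_rpow hL β).mono fun _ ht => hL.le.trans (le_of_lt ht)).symm measurableSet_Ioi

lemma integral_Ioi_div_rpow {L β : ℝ} (hL : 0 < L) (hβ : β < -1) :
    ∫ t in Ioi L, (t / L) ^ β = L / -(β + 1) := by
  rw [setIntegral_congr_fun measurableSet_Ioi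
      ((eqOn_div_rpow hL β).mono fun _ ht => hL.le.trans (le_of_lt ht)),
    integral_div, integral_Ioi_rpow_of_lt hβ hL, Real.rpow_add_one hL.ne']
  field_simp

lemma integrable_nearProfile_abs_sub {L β : ℝ} (hL : 0 < L) (hβ : -1 < β) (a : ℝ) :
    Integrable fun z => nearProfile L β |z - a| :=
  (integrable_comp_abs ((integrableOn_Ioo_div_rpow hL hβ).integrable_indicator
    measurableSet_Ioo).integrableOn).comp_sub_right a

lemma integral_nearProfile_abs_sub {L β : ℝ} (hL : 0 < L) (hβ : -1 < β) (a : ℝ) :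
    ∫ z, nearProfile L β |z - a| = 2 * (L / (β + 1)) := by
  rw [integral_comp_abs_sub, nearProfile, setIntegral_indicator measurableSet_Ioo,
    inter_eq_right.mpr Ioo_subset_Ioi_self, integral_Ioo_div_rpow hL hβ]

lemma integrable_farProfile_abs_sub {L β : ℝ} (hL : 0 < L) (hβ : β < -1) (a : ℝ) :
    Integrable fun z => farProfile L β |z - a| :=
  (integrable_comp_abs ((Iff.mpr integrableOn_Ici_iff_integrableOn_Ioi
    (integrableOn_Ioi_div_rpow hL hβ)).integrable_indicator
      measurableSet_Ici).integrableOn).comp_sub_right a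

lemma integral_farProfile_abs_sub {L β : ℝ} (hL : 0 < L) (hβ : β < -1) (a : ℝ) :
    ∫ z, farProfile L β |z - a| = 2 * (L / -(β + 1)) := by
  rw [integral_comp_abs_sub, farProfile, setIntegral_indicator measurableSet_Ici,
    inter_eq_right.mpr (Ici_subset_Ioi.mpr hL), integral_Ici_eq_integral_Ioi,
    integral_Ioi_div_rpow hL hβ]

lemma rpow_sub_two {u : ℝ} (hu : 0 < u) (γ : ℝ) : u ^ (γ - 2) = u ^ γ / u ^ 2 := by
  rw [Real.rpow_sub hu, Real.rpow_two]

noncomputable def boundaryKernel (V : ℝ → ℝ) (r s : ℝ) : ℝ := V r ^ 2 / (r ^ 2 * V s)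

section Kernel

variable {V : ℝ → ℝ} {C β c γ r s R ρ : ℝ}

lemma boundaryKernel_nonneg (hVnonneg : ∀ t, 0 ≤ t → 0 ≤ V t) (r : ℝ) (hs : 0 ≤ s) :
    0 ≤ boundaryKernel V r s := by
  have := hVnonneg s hs
  unfold boundaryKernel
  positivity

lemma boundaryKernel_le_near (hVmono : MonotoneOn V (Ioi 0)) (hVR : 0 < V R) (hVr : 0 ≤ V r)
    (hr : 0 < r) (hR : 0 < R) (hRs : R ≤ s) (hloc : V r ≤ c * (r / R) ^ γ * V R) :
    boundaryKernel V r s ≤ c ^ 2 * (V R / R ^ 2) * (r / R) ^ (2 * γ - 2) := by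
  have hu : 0 < r / R := div_pos hr hR
  calc boundaryKernel V r s ≤ (c * (r / R) ^ γ * V R) ^ 2 / (r ^ 2 * V R) := by
        rw [boundaryKernel]
        gcongr
        · exact hVmono hR (hR.trans_le hRs) hRs
    _ = c ^ 2 * (V R / R ^ 2) * (r / R) ^ (2 * γ - 2) := by
        rw [rpow_sub_two hu, mul_comm 2 γ, Real.rpow_mul hu.le, Real.rpow_two]
        field_simp

lemma boundaryKernel_le_far (hV : UpperScaling V C β) (hβ : β ≤ 1) (hC : 0 ≤ C)
    (hVpos : ∀ t, 0 < t → 0 < V t) (hVmono : MonotoneOn V (Ioi 0))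
    (hR : 0 < R) (hRr : R ≤ r) (hrs : r / 2 ≤ s) :
    boundaryKernel V r s ≤ 2 * C ^ 2 * (V R / R ^ 2) * (r / R) ^ (β - 2) := by
  have hr : 0 < r := hR.trans_le hRr
  have hVs : 0 < V s := hVpos s (by linarith)
  have hVr_s : V r ≤ 2 * C * V s :=
    calc V r ≤ 2 * C * V (r / 2) :=
          hV.le_two_mul hβ hC (hVpos _ (half_pos hr)).le (half_pos hr) (by linarith) (by linarith)
      _ ≤ 2 * C * V s := by gcongr; exact hVmono (half_pos hr) (mem_Ioi.mpr (by linarith)) hrs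
  have hVr_R : V r ≤ C * (r / R) ^ β * V R := hV.le_mul_div_rpow hR hRr
  calc boundaryKernel V r s ≤ (2 * C * V s) * (C * (r / R) ^ β * V R) / (r ^ 2 * V s) := by
        have := (hVpos r hr).le
        rw [boundaryKernel, sq (V r)]
        gcongr
    _ = 2 * C ^ 2 * (V R / R ^ 2) * (r / R) ^ (β - 2) := by
        rw [rpow_sub_two (div_pos hr hR)]
        field_simp

lemma boundaryKernel_le_near_frontier (hV : UpperScaling V C β) (hβ : β ≤ 1) (hC : 0 ≤ C)
    (hVpos : ∀ t, 0 < t → 0 < V t) (hVmono : MonotoneOn V (Ioi 0))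
    (hs : 0 < s) (hsr : s < r / 2) (hrρ : r ≤ ρ + s) (hρr : ρ ≤ r + s) :
    boundaryKernel V r s ≤ 9 * C ^ 3 * (V ρ / ρ ^ 2) * (s / ρ) ^ (-β) := by
  have hρ : 0 < ρ := by linarith
  have hr : 0 < r := by linarith
  have hVs : 0 < V s := hVpos s hs
  have hVρ : 0 ≤ V ρ := (hVpos ρ hρ).le
  have hVr : 0 ≤ V r := (hVpos r hr).le
  have hVr_ρ : V r ≤ 2 * C * V ρ :=
    (hVmono hr (mem_Ioi.mpr (by positivity)) (by linarith : r ≤ 2 * ρ)).trans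
      (hV.le_two_mul hβ hC (hVpos ρ hρ).le hρ (by linarith) le_rfl)
  have hVρ_s : V ρ ≤ C * (ρ / s) ^ β * V s := hV.le_mul_div_rpow hs (by linarith)
  calc boundaryKernel V r s ≤ (2 * C * V ρ) ^ 2 / ((2 / 3 * ρ) ^ 2 * V s) := by
        rw [boundaryKernel]
        gcongr
        linarith
    _ ≤ 4 * C ^ 2 * V ρ * (C * (ρ / s) ^ β * V s) / ((2 / 3 * ρ) ^ 2 * V s) := by
        rw [mul_pow, mul_pow, sq (V ρ), ← mul_assoc]
        gcongr
        norm_num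
    _ = 9 * C ^ 3 * (V ρ / ρ ^ 2) * (s / ρ) ^ (-β) := by
        rw [Real.rpow_neg (div_nonneg hs.le hρ.le), ← Real.inv_rpow (div_nonneg hs.le hρ.le),
          inv_div]
        field_simp
        ring

end Kernel

lemma frontier_iUnion_subset_of_finite {X ι : Type*} [TopologicalSpace X] [Finite ι]
    (s : ι → Set X) : frontier (⋃ i, s i) ⊆ ⋃ i, frontier (s i) := by
  intro x hx
  rw [frontier, closure_iUnion_of_finite] at hx
  obtain ⟨i, hi⟩ := mem_iUnion.mp hx.1
  exact mem_iUnion.mpr ⟨i, hi, fun h => hx.2 (interior_mono (subset_iUnion s i) h)⟩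

lemma finite_frontier_Ioo (a b : ℝ) : (frontier (Ioo a b)).Finite := by
  rcases lt_or_ge a b with hab | hab
  · rw [frontier_Ioo hab]
    exact toFinite _
  · simp [Ioo_eq_empty (not_lt.mpr hab)]

lemma two_mul_infDist_compl_le_diam {D : Set ℝ} (hD : Bornology.IsBounded D) (x : ℝ) :
    2 * infDist x Dᶜ ≤ diam D := by
  have hball : diam (ball x (infDist x Dᶜ)) = 2 * infDist x Dᶜ := by
    rw [Real.ball_eq_Ioo, Real.diam_Ioo (by linarith [infDist_nonneg (x := x) (s := Dᶜ)])]
    ring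
  exact hball ▸ diam_mono ball_infDist_compl_subset hD

lemma nonempty_of_infDist_pos {X : Type*} [PseudoMetricSpace X] {x : X} {s : Set X}
    (h : 0 < infDist x s) : s.Nonempty :=
  nonempty_iff_ne_empty.mpr fun he => by simp [he] at h

lemma IsOpen.frontier_subset_compl {X : Type*} [TopologicalSpace X] {D : Set X}
    (hD : IsOpen D) : frontier D ⊆ Dᶜ :=
  (disjoint_frontier_iff_isOpen.mpr hD).subset_compl_right

lemma infDist_compl_le_infDist_frontier_add {X : Type*} [MetricSpace X] {D : Set X}
    (hD : IsOpen D) (hF : (frontier D).Nonempty) (x z : X) :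
    infDist x Dᶜ ≤ infDist z (frontier D) + dist x z := by
  linarith [infDist_le_infDist_add_dist (x := x) (y := z) (s := Dᶜ),
    infDist_le_infDist_of_subset (x := z) hD.frontier_subset_compl hF]

section Majorant

variable {V : ℝ → ℝ} {c C γ β x R : ℝ} {F : Finset ℝ}

lemma exists_mem_frontier_boundaryKernel_le (hV : UpperScaling V C β) (hβ : β ≤ 1) (hC : 0 ≤ C)
    (hVpos : ∀ t, 0 < t → 0 < V t) (hVmono : MonotoneOn V (Ioi 0)) {D : Set ℝ} {z r s : ℝ}
    (hr_def : |x - z| = r) (hs_def : infDist z (frontier D) = s) (hs : 0 < s) (hsr : s < r / 2) :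
    ∃ w ∈ frontier D, boundaryKernel V r s ≤
      9 * C ^ 3 * (V |x - w| / |x - w| ^ 2) * nearProfile |x - w| (-β) |z - w| := by
  obtain ⟨w, hwF, hw⟩ :=
    isClosed_frontier.exists_infDist_eq_dist (nonempty_of_infDist_pos (hs_def ▸ hs)) z
  rw [hs_def, Real.dist_eq] at hw
  have hrw : r ≤ |x - w| + s := by
    rw [← hr_def, hw, abs_sub_comm z w]
    exact abs_sub_le x w z
  have hwr : |x - w| ≤ r + s := by
    rw [← hr_def, hw]
    exact abs_sub_le x z w
  have hval : nearProfile |x - w| (-β) |z - w| = (s / |x - w|) ^ (-β) :=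
    hw ▸ indicator_of_mem (mem_Ioo.mpr ⟨hs, by linarith⟩) _
  exact ⟨w, hwF, hval ▸ boundaryKernel_le_near_frontier hV hβ hC hVpos hVmono hs hsr hrw hwr⟩

noncomputable def kernelMajorant (V : ℝ → ℝ) (c C γ β x R : ℝ) (F : Finset ℝ) (z : ℝ) : ℝ :=
  c ^ 2 * (V R / R ^ 2) * nearProfile R (2 * γ - 2) |z - x| +
    2 * C ^ 2 * (V R / R ^ 2) * farProfile R (β - 2) |z - x| +
    ∑ w ∈ F, 9 * C ^ 3 * (V |x - w| / |x - w| ^ 2) * nearProfile |x - w| (-β) |z - w|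

lemma boundaryKernel_le_kernelMajorant (hV : UpperScaling V C β) (hβ : β ≤ 1) (hC : 0 ≤ C)
    (hV0 : V 0 = 0) (hVnonneg : ∀ t, 0 ≤ t → 0 ≤ V t) (hVpos : ∀ t, 0 < t → 0 < V t)
    (hVmono : MonotoneOn V (Ioi 0))
    (hloc : ∀ η, 0 < η → η < 1 → V (η * R) ≤ c * η ^ γ * V R)
    {D : Set ℝ} (hD : IsOpen D) (hF : frontier D ⊆ F) (hR : 0 < R)
    (hRδ : 2 * R ≤ infDist x Dᶜ) (z : ℝ) :
    boundaryKernel V |x - z| (infDist z (frontier D)) ≤ kernelMajorant V c C γ β x R F z := by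
  have hVR := hVnonneg R hR.le
  have hnear := mul_nonneg (by positivity : 0 ≤ c ^ 2 * (V R / R ^ 2))
    (nearProfile_nonneg R (2 * γ - 2) |z - x|)
  have hfar := mul_nonneg (by positivity : 0 ≤ 2 * C ^ 2 * (V R / R ^ 2))
    (farProfile_nonneg hR.le (β - 2) |z - x|)
  have hterm : ∀ w ∈ F, 0 ≤ 9 * C ^ 3 * (V |x - w| / |x - w| ^ 2) *
      nearProfile |x - w| (-β) |z - w| := fun w _ =>
    mul_nonneg (by have := hVnonneg _ (abs_nonneg (x - w)); positivity) (nearProfile_nonneg _ _ _)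
  have hsum := Finset.sum_nonneg hterm
  have hzx : |z - x| = |x - z| := abs_sub_comm z x
  rw [kernelMajorant]
  generalize hr_def : |x - z| = r at hzx ⊢
  generalize hs_def : infDist z (frontier D) = s
  rcases (hs_def ▸ infDist_nonneg : 0 ≤ s).eq_or_lt with hs | hs
  · rw [← hs, boundaryKernel, hV0, mul_zero, div_zero]
    positivity
  rcases (hr_def ▸ abs_nonneg (x - z) : 0 ≤ r).eq_or_lt with hr | hr
  · rw [← hr, boundaryKernel, zero_pow two_ne_zero, zero_mul, div_zero]
    positivity
  have hsr : 2 * R ≤ s + r := by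
    have := infDist_compl_le_infDist_frontier_add hD (nonempty_of_infDist_pos (hs_def ▸ hs)) x z
    rw [Real.dist_eq, hs_def, hr_def] at this
    linarith
  rcases lt_or_ge r R with hrR | hRr
  · have hVr : V r ≤ c * (r / R) ^ γ * V R := by
      simpa [div_mul_cancel₀ r hR.ne'] using hloc (r / R) (div_pos hr hR) ((div_lt_one hR).mpr hrR)
    have hA := boundaryKernel_le_near hVmono (hVpos R hR) (hVnonneg r hr.le) hr hR
      (by linarith : R ≤ s) hVr
    have hval : nearProfile R (2 * γ - 2) |z - x| = (r / R) ^ (2 * γ - 2) :=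
      hzx ▸ indicator_of_mem (mem_Ioo.mpr ⟨hr, hrR⟩) _
    rw [hval] at hnear ⊢
    linarith
  rcases le_or_gt (r / 2) s with hrs | hsr2
  · have hB := boundaryKernel_le_far hV hβ hC hVpos hVmono hR hRr hrs
    have hval : farProfile R (β - 2) |z - x| = (r / R) ^ (β - 2) :=
      hzx ▸ indicator_of_mem (mem_Ici.mpr hRr) _
    rw [hval] at hfar ⊢
    linarith
  obtain ⟨w, hwF, hW⟩ :=
    exists_mem_frontier_boundaryKernel_le hV hβ hC hVpos hVmono hr_def hs_def hs hsr2
  linarith [Finset.single_le_sum hterm (hF hwF)]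

end Majorant

section MajorantIntegral

variable {V : ℝ → ℝ} {c C γ β x R : ℝ} {F : Finset ℝ}

lemma integrable_kernelMajorant (hγ : 1 / 2 < γ) (hβ : β < 1) (hR : 0 < R)
    (hF : ∀ w ∈ F, 0 < |x - w|) : Integrable (kernelMajorant V c C γ β x R F) :=
  (((integrable_nearProfile_abs_sub hR (by linarith) x).const_mul _).add
    ((integrable_farProfile_abs_sub hR (by linarith) x).const_mul _)).add
    (integrable_finsetSum F fun w hw =>
      (integrable_nearProfile_abs_sub (hF w hw) (by linarith) w).const_mul _)

lemma integral_kernelMajorant (hγ : 1 / 2 < γ) (hβ : β < 1) (hR : 0 < R)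
    (hF : ∀ w ∈ F, 0 < |x - w|) :
    ∫ z, kernelMajorant V c C γ β x R F z =
      2 * c ^ 2 / (2 * γ - 1) * (V R / R) + 4 * C ^ 2 / (1 - β) * (V R / R) +
        ∑ w ∈ F, 18 * C ^ 3 / (1 - β) * (V |x - w| / |x - w|) := by
  have hnear := (integrable_nearProfile_abs_sub hR (by linarith : -1 < 2 * γ - 2) x).const_mul
    (c ^ 2 * (V R / R ^ 2))
  have hfar := (integrable_farProfile_abs_sub hR (by linarith : β - 2 < -1) x).const_mul
    (2 * C ^ 2 * (V R / R ^ 2))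
  have hterm : ∀ w ∈ F, Integrable fun z =>
      9 * C ^ 3 * (V |x - w| / |x - w| ^ 2) * nearProfile |x - w| (-β) |z - w| := fun w hw =>
    (integrable_nearProfile_abs_sub (hF w hw) (by linarith) w).const_mul _
  simp only [kernelMajorant]
  rw [integral_add ?_ (integrable_finsetSum F hterm), integral_add hnear hfar,
    integral_finsetSum F hterm, integral_const_mul, integral_const_mul,
    integral_nearProfile_abs_sub hR (by linarith) x,
    integral_farProfile_abs_sub hR (by linarith) x]
  swap
  · exact hnear.add hfar
  congr 1
  · rw [show 2 * γ - 2 + 1 = 2 * γ - 1 by ring, show -(β - 2 + 1) = 1 - β by ring]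
    have hγ' : 2 * γ - 1 ≠ 0 := by linarith
    have hβ' : 1 - β ≠ 0 := by linarith
    field_simp
    ring
  · refine Finset.sum_congr rfl fun w hw => ?_
    rw [integral_const_mul, integral_nearProfile_abs_sub (hF w hw) (by linarith) w]
    rw [neg_add_eq_sub]
    have hβ' : 1 - β ≠ 0 := by linarith
    have hw' := (hF w hw).ne'
    field_simp
    ring

lemma integral_kernelMajorant_le {δ : ℝ} (hV : UpperScaling V C β) (hγ : 1 / 2 < γ) (hβ : β < 1)
    (hC : 0 ≤ C) (hVpos : ∀ t, 0 < t → 0 < V t) (hVmono : MonotoneOn V (Ioi 0))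
    (hδ : 0 < δ) (hF : ∀ w ∈ F, δ ≤ |x - w|) :
    ∫ z, kernelMajorant V c C γ β x (δ / 2) F z ≤
      (4 * c ^ 2 / (2 * γ - 1) + (8 * C ^ 2 + 18 * F.card * C ^ 4) / (1 - β)) * (V δ / δ) := by
  have hγ' : 0 < 2 * γ - 1 := by linarith
  have hβ' : 0 < 1 - β := by linarith
  have hVδ := (hVpos δ hδ).le
  have hhalf : V (δ / 2) / (δ / 2) ≤ 2 * (V δ / δ) :=
    calc V (δ / 2) / (δ / 2) = 2 * (V (δ / 2) / δ) := by field_simp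
      _ ≤ 2 * (V δ / δ) := by gcongr; exact hVmono (half_pos hδ) hδ (half_le_self hδ.le)
  have hρ : ∀ w ∈ F, V |x - w| / |x - w| ≤ C * (V δ / δ) := fun w hw =>
    hV.div_le_mul_div hβ.le hC hVδ hδ (hF w hw)
  rw [integral_kernelMajorant hγ hβ (half_pos hδ) fun w hw => hδ.trans_le (hF w hw)]
  calc _ ≤ 2 * c ^ 2 / (2 * γ - 1) * (2 * (V δ / δ)) + 4 * C ^ 2 / (1 - β) * (2 * (V δ / δ)) +
        ∑ _w ∈ F, 18 * C ^ 3 / (1 - β) * (C * (V δ / δ)) := by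
        gcongr with w hw
        exact hρ w hw
    _ = _ := by
        rw [Finset.sum_const, nsmul_eq_mul]
        field_simp
        ring

end MajorantIntegral

lemma lintegral_ofReal_le_ofReal_integral {α : Type*} [MeasurableSpace α] {μ : Measure α}
    {f g : α → ℝ} (hfg : ∀ a, f a ≤ g a) (hg0 : ∀ a, 0 ≤ g a) (hg : Integrable g μ) :
    ∫⁻ a, ENNReal.ofReal (f a) ∂μ ≤ ENNReal.ofReal (∫ a, g a ∂μ) := by
  rw [ofReal_integral_eq_lintegral_ofReal hg (ae_of_all _ hg0)]
  exact lintegral_mono fun a => ENNReal.ofReal_le_ofReal (hfg a)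

lemma finite_frontier_iUnion_Ioo {ι : Type*} [Finite ι] (p q : ι → ℝ) :
    (frontier (⋃ i, Ioo (p i) (q i))).Finite :=
  (finite_iUnion fun _ => finite_frontier_Ioo _ _).subset (frontier_iUnion_subset_of_finite _)

theorem statement10_general (k : ℕ) (p q : Fin k → ℝ)
    (D : Set ℝ) (hD : D = ⋃ i, Set.Ioo (p i) (q i))
    (d : ℝ) (hd : d = Metric.diam D)
    (V : ℝ → ℝ)
    (hV0 : V 0 = 0)
    (hVmono : StrictMonoOn V (Set.Ici 0))
    (hVnonneg : ∀ r : ℝ, 0 ≤ r → 0 ≤ V r)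
    (αbar Cbar α₁ c₁ : ℝ)
    (hαbar : αbar < 2)
    (hCbar : 0 < Cbar)
    (hup : ∀ r : ℝ, 0 < r → ∀ lam : ℝ, 1 ≤ lam → V (lam * r) ≤ Cbar * lam ^ (αbar / 2) * V r)
    (hα₁ : 1 < α₁)
    (hloc : ∀ η r : ℝ, 0 < η → η < 1 → 0 < r → r < max 1 d →
      V (η * r) ≤ c₁ * η ^ (α₁ / 2) * V r) :
    ∃ C : ℝ, 0 < C ∧ ∀ x ∈ D,
      (∫⁻ z : ℝ, ENNReal.ofReal
          (V |x - z| ^ 2 / (|x - z| ^ 2 * V (infDist z (frontier D))))) ≤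
        ENNReal.ofReal (C * V (infDist x Dᶜ) / infDist x Dᶜ) := by
  have hDopen : IsOpen D := hD ▸ isOpen_iUnion fun _ => isOpen_Ioo
  have hDbdd : Bornology.IsBounded D :=
    hD ▸ Bornology.isBounded_iUnion.mpr fun _ => isBounded_Ioo _ _
  have hDc : Dᶜ.Nonempty := nonempty_compl.mpr fun h => NormedSpace.unbounded_univ ℝ ℝ (h ▸ hDbdd)
  obtain ⟨F, hF⟩ : ∃ F : Finset ℝ, ↑F = frontier D :=
    ⟨_, (hD ▸ finite_frontier_iUnion_Ioo p q).coe_toFinset⟩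
  have hVpos : ∀ t, 0 < t → 0 < V t := fun t ht => hV0 ▸ hVmono self_mem_Ici ht.le ht
  have hVmono' : MonotoneOn V (Ioi 0) := hVmono.monotoneOn.mono Ioi_subset_Ici_self
  have hγ : 1 / 2 < α₁ / 2 := by linarith
  have hβ : αbar / 2 < 1 := by linarith
  refine ⟨4 * c₁ ^ 2 / (2 * (α₁ / 2) - 1) +
      (8 * Cbar ^ 2 + 18 * F.card * Cbar ^ 4) / (1 - αbar / 2),
    add_pos_of_nonneg_of_pos (div_nonneg (by positivity) (by linarith))
      (div_pos (by positivity) (by linarith)), fun x hx => ?_⟩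
  set δ := infDist x Dᶜ
  have hδ : 0 < δ := (hDopen.isClosed_compl.notMem_iff_infDist_pos hDc).mp (not_not.mpr hx)
  have hδd : 2 * δ ≤ d := hd ▸ two_mul_infDist_compl_le_diam hDbdd x
  have hFδ : ∀ w ∈ F, δ ≤ |x - w| := fun w hw => Real.dist_eq x w ▸ infDist_le_dist_of_mem
    (hDopen.frontier_subset_compl (hF ▸ hw))
  have hdom := boundaryKernel_le_kernelMajorant (x := x) hup hβ.le hCbar.le hV0 hVnonneg hVpos
    hVmono' (fun η h0 h1 => hloc η (δ / 2) h0 h1 (half_pos hδ) (by linarith [le_max_right 1 d]))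
    hDopen hF.symm.subset (half_pos hδ) (by linarith)
  refine (lintegral_ofReal_le_ofReal_integral hdom
    (fun z => (boundaryKernel_nonneg hVnonneg _ infDist_nonneg).trans (hdom z))
    (integrable_kernelMajorant hγ hβ (half_pos hδ) fun w hw => hδ.trans_le (hFδ w hw))).trans ?_
  rw [mul_div_assoc]
  exact ENNReal.ofReal_le_ofReal
    (integral_kernelMajorant_le hup hγ hβ hCbar.le hVpos hVmono' hδ hFδ)

/-- For a one-dimensional C^{1,1} set D (finite union of intervals of
length ≥ r₀, pairwise distances ≥ r₀) and V with the stated scalings,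
∫_ℝ V(|x−z|)²/(|x−z|²·V(dist(z,∂D))) dz ≤ C·V(δ_x)/δ_x for every x ∈ D. -/
theorem statement10 (k : ℕ) (hk : 0 < k) (p q : Fin k → ℝ) (r₀ : ℝ) (hr₀ : 0 < r₀)
    (hlen : ∀ i, r₀ ≤ q i - p i)
    (hsep : ∀ i j : Fin k, i < j → r₀ ≤ p j - q i)
    (D : Set ℝ) (hD : D = ⋃ i, Set.Ioo (p i) (q i))
    (d : ℝ) (hd : d = Metric.diam D)
    (V : ℝ → ℝ)
    (hV0 : V 0 = 0)
    (hVcont : ContinuousOn V (Set.Ici 0))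
    (hVmono : StrictMonoOn V (Set.Ici 0))
    (hVnonneg : ∀ r : ℝ, 0 ≤ r → 0 ≤ V r)
    (hVsurj : ∀ s : ℝ, 0 ≤ s → ∃ r : ℝ, 0 ≤ r ∧ V r = s)
    (α αbar c Cbar α₁ c₁ : ℝ)
    (hα : 0 < α) (hααbar : α ≤ αbar) (hαbar : αbar < 2)
    (hc : 0 < c) (hCbar : 0 < Cbar)
    (hlow : ∀ r : ℝ, 0 < r → ∀ lam : ℝ, 1 ≤ lam → c * lam ^ (α / 2) * V r ≤ V (lam * r))
    (hup : ∀ r : ℝ, 0 < r → ∀ lam : ℝ, 1 ≤ lam → V (lam * r) ≤ Cbar * lam ^ (αbar / 2) * V r)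
    (hα₁ : 1 < α₁) (hc₁ : 1 ≤ c₁)
    (hloc : ∀ η r : ℝ, 0 < η → η < 1 → 0 < r → r < max 1 d →
      V (η * r) ≤ c₁ * η ^ (α₁ / 2) * V r) :
    ∃ C : ℝ, 0 < C ∧ ∀ x ∈ D,
      (∫⁻ z : ℝ, ENNReal.ofReal
          (V |x - z| ^ 2 / (|x - z| ^ 2 * V (infDist z (frontier D))))) ≤
        ENNReal.ofReal (C * V (infDist x Dᶜ) / infDist x Dᶜ) :=
  statement10_general k p q D hD d hd V hV0 hVmono hVnonneg αbar Cbar α₁ c₁ hαbar hCbar hup hα₁ hloc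
end

section
/- Let D ⊊ ℝ be a nonempty open set with diam(D) ≤ R < ∞, and for w ∈ D write δ_w = dist(w, Dᶜ). Let V : (0,∞) → (0,∞) be non-decreasing with V(ηr) ≤ c₁ η^{α₁/2} V(r) for all 0 < η < 1 and 0 < r < 2R, where c₁ ≥ 1 and α₁ > 1. Then there is a constant κ > 0, depending only on c₁ and α₁, such that for all x, y ∈ D with 0 < |x−y| ≤ δ_x/2: V(δ_x) V(δ_y) · min( (δ_x δ_y)^{-1/2}, |x−y|^{-1} ) ≥ κ · V(|x−y|)² / |x−y|. -/
open Metric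

/-- Near the diagonal (0 < |x−y| ≤ δ_x/2), the Green-function profile
g(x,y) = V(δ_x)V(δ_y)·min(1/√(δ_xδ_y), 1/|x−y|) dominates κ·V(|x−y|)²/|x−y|. -/
theorem statement12 (D : Set ℝ) (hDopen : IsOpen D) (hDne : D.Nonempty)
    (hDuniv : D ≠ Set.univ) (hDbdd : Bornology.IsBounded D)
    (R : ℝ) (hdiam : Metric.diam D ≤ R)
    (V : ℝ → ℝ) (c₁ α₁ : ℝ) (hc₁ : 1 ≤ c₁) (hα₁ : 1 < α₁)
    (hVpos : ∀ r : ℝ, 0 < r → 0 < V r)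
    (hVmono : ∀ r s : ℝ, 0 < r → r ≤ s → V r ≤ V s)
    (hloc : ∀ η r : ℝ, 0 < η → η < 1 → 0 < r → r < 2 * R →
      V (η * r) ≤ c₁ * η ^ (α₁ / 2) * V r) :
    ∃ κ : ℝ, 0 < κ ∧ ∀ x ∈ D, ∀ y ∈ D, 0 < |x - y| → |x - y| ≤ infDist x Dᶜ / 2 →
      κ * V |x - y| ^ 2 / |x - y| ≤
        V (infDist x Dᶜ) * V (infDist y Dᶜ) *
          min (Real.sqrt (infDist x Dᶜ * infDist y Dᶜ))⁻¹ |x - y|⁻¹ := by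
  have hc₁0 : (0:ℝ) < c₁ := lt_of_lt_of_le one_pos hc₁
  refine ⟨(c₁ ^ 2)⁻¹, by positivity, ?_⟩
  intro x hx y hy hr hr2
  set a := infDist x Dᶜ with ha
  set b := infDist y Dᶜ with hb
  set r := |x - y| with hrdef
  have ha0 : 0 < a := by
    have : 0 < r := hr
    nlinarith
  -- a ≤ R
  have haR : a ≤ R := by
    by_contra hcon
    push_neg at hcon
    set t : ℝ := (R + a) / 2 with ht
    have ht0 : 0 < t := by
      have : 0 < R := by
        -- x and x + a/2 are in D, so R ≥ diam D ≥ a/2 > 0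
        have hmem : x + a / 2 ∈ D := by
          apply ball_infDist_compl_subset
          rw [mem_ball, Real.dist_eq, show x + a / 2 - x = a / 2 by ring,
            abs_of_pos (by linarith : (0:ℝ) < a / 2)]
          rw [← ha]; linarith
        have := dist_le_diam_of_mem hDbdd hmem hx
        rw [Real.dist_eq] at this
        have h2 : |x + a / 2 - x| = a / 2 := by
          rw [show x + a / 2 - x = a / 2 by ring, abs_of_pos (by linarith)]
        rw [h2] at this
        linarith
      linarith
    have hta : t < a := by linarith
    have hmem : x + t ∈ D := by
      apply ball_infDist_compl_subset
      rw [mem_ball, Real.dist_eq, show x + t - x = t by ring, abs_of_pos ht0, ← ha]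
      exact hta
    have := dist_le_diam_of_mem hDbdd hmem hx
    rw [Real.dist_eq, show x + t - x = t by ring, abs_of_pos ht0] at this
    have : t ≤ R := le_trans this hdiam
    linarith
  have hR0 : 0 < R := lt_of_lt_of_le ha0 haR
  -- b ≥ a - r and b ≤ a + r
  have hba : a ≤ b + r := by
    have := infDist_le_infDist_add_dist (x := x) (y := y) (s := Dᶜ)
    rwa [Real.dist_eq] at this
  have hab' : b ≤ a + r := by
    have := infDist_le_infDist_add_dist (x := y) (y := x) (s := Dᶜ)
    rw [Real.dist_eq, abs_sub_comm] at this
    exact this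
  have hrb : r ≤ b := by linarith
  have hra : r ≤ a := by linarith
  have hb0 : 0 < b := lt_of_lt_of_le hr hrb
  have ha2R : a < 2 * R := by linarith
  have hb2R : b < 2 * R := by linarith
  -- key scaling estimate
  have key : ∀ δ : ℝ, r ≤ δ → δ < 2 * R → V r ≤ c₁ * (r / δ) ^ (α₁ / 2) * V δ := by
    intro δ hrδ hδR
    have hδ0 : 0 < δ := lt_of_lt_of_le hr hrδ
    rcases eq_or_lt_of_le hrδ with h | h
    · rw [h, div_self (ne_of_gt hδ0), Real.one_rpow]
      have := hVpos δ hδ0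
      nlinarith
    · have := hloc (r / δ) δ (by positivity) ((div_lt_one hδ0).2 h) hδ0 hδR
      rwa [div_mul_cancel₀ _ (ne_of_gt hδ0)] at this
  have hVr := hVpos r hr
  have hVa := hVpos a ha0
  have hVb := hVpos b hb0
  have hVra : V r ≤ V a := hVmono r a hr hra
  have hVrb : V r ≤ V b := hVmono r b hr hrb
  have hs0 : 0 < Real.sqrt (a * b) := Real.sqrt_pos.2 (by positivity)
  rw [mul_min_of_nonneg _ _ (by positivity : (0:ℝ) ≤ V a * V b)]
  apply le_min
  · -- sqrt branch
    set s := Real.sqrt (a * b) with hs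
    set t : ℝ := r / s with htdef
    have ht0 : 0 < t := by positivity
    have hs2 : s ^ 2 = a * b := Real.sq_sqrt (by positivity)
    have ht1 : t ≤ 1 := by
      rw [div_le_one hs0]
      have : r ^ 2 ≤ s ^ 2 := by rw [hs2]; nlinarith
      nlinarith
    have hab2 : (r / a) * (r / b) = t ^ 2 := by
      rw [htdef, div_pow, hs2]
      field_simp
    have hpow : (r / a) ^ (α₁ / 2) * (r / b) ^ (α₁ / 2) = t ^ α₁ := by
      rw [← Real.mul_rpow (by positivity) (by positivity), hab2,
        ← Real.rpow_natCast t 2, ← Real.rpow_mul ht0.le]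
      norm_num
      congr 1
      ring
    have htle : t ^ α₁ ≤ t := by
      calc t ^ α₁ ≤ t ^ (1:ℝ) := Real.rpow_le_rpow_of_exponent_ge ht0 ht1 hα₁.le
        _ = t := Real.rpow_one t
    have keyA := key a hra ha2R
    have keyB := key b hrb hb2R
    have hA0 : (0:ℝ) ≤ (r / a) ^ (α₁ / 2) := Real.rpow_nonneg (by positivity) _
    have hB0 : (0:ℝ) ≤ (r / b) ^ (α₁ / 2) := Real.rpow_nonneg (by positivity) _
    have m1 : V r * V r ≤ (c₁ * (r / a) ^ (α₁ / 2) * V a) * (c₁ * (r / b) ^ (α₁ / 2) * V b) :=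
      mul_le_mul keyA keyB hVr.le (by positivity)
    have m2 : (c₁ * (r / a) ^ (α₁ / 2) * V a) * (c₁ * (r / b) ^ (α₁ / 2) * V b)
        = c₁ ^ 2 * ((r / a) ^ (α₁ / 2) * (r / b) ^ (α₁ / 2)) * (V a * V b) := by ring
    have main : V r ^ 2 ≤ c₁ ^ 2 * (r / s) * (V a * V b) := by
      rw [sq]
      calc V r * V r ≤ c₁ ^ 2 * ((r / a) ^ (α₁ / 2) * (r / b) ^ (α₁ / 2)) * (V a * V b) := by
            rw [← m2]; exact m1
        _ = c₁ ^ 2 * (t ^ α₁) * (V a * V b) := by rw [hpow]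
        _ ≤ c₁ ^ 2 * (r / s) * (V a * V b) := by
            apply mul_le_mul_of_nonneg_right _ (by positivity)
            apply mul_le_mul_of_nonneg_left _ (by positivity)
            exact htle.trans_eq rfl
      
    calc (c₁ ^ 2)⁻¹ * V r ^ 2 / r ≤ (c₁ ^ 2)⁻¹ * (c₁ ^ 2 * (r / s) * (V a * V b)) / r := by
          gcongr
      _ = V a * V b * s⁻¹ := by field_simp
  · -- 1/r branch
    rw [div_eq_mul_inv]
    apply mul_le_mul_of_nonneg_right _ (by positivity)
    have h1 : (c₁ ^ 2)⁻¹ ≤ 1 := inv_le_one_of_one_le₀ (one_le_pow₀ hc₁)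
    have h2 : V r ^ 2 ≤ V a * V b := by
      rw [sq]; exact mul_le_mul hVra hVrb hVr.le hVa.le
    have h3 : (c₁ ^ 2)⁻¹ * V r ^ 2 ≤ 1 * V r ^ 2 :=
      mul_le_mul_of_nonneg_right h1 (sq_nonneg _)
    linarith
end

section
/- Let V : (0,∞) → (0,∞) be non-decreasing such that M(r) = V(r)²/r² is non-increasing and lim_{r→0⁺} M(r) = ∞. Let D ⊂ ℝ be a finite union of k disjoint bounded open intervals, δ_z = dist(z, Dᶜ), and let b : ℝ → ℝ be measurable satisfying the Kato condition lim_{r→0⁺} sup_{x∈ℝ} ∫_{B(x,r)} M(|x−z|) |b(z)| dz = 0. Let g : ℝ × ℝ → ℝ be measurable with g(z,y) = 0 for z ∉ D and |g(z,y)| ≤ A · M( δ_z ∧ |z−y| ) for all z ∈ D, y ∈ ℝ, for some constant A. Then lim_{N→∞} sup_{y∈ℝ} ∫_{{z : |g(z,y)| > N}} |g(z,y)| |b(z)| dz = 0; i.e., g(·,y) is uniformly in y integrable against |b(z)|dz. -/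
/-!
If `N ≥ A·M(r)` and `|g(z,y)| > N`, then `δ_z ∧ |z - y| < r` because `M` is non-increasing.
The distance `δ_z` to `Dᶜ` is at least the distance from `z` to the nearer endpoint of the
interval containing `z`, so `z` lies within `r` of `y` or of one of the finitely many endpoints
`e`, and there `|g(z,y)| ≤ A·M(|e - z|)`. The level set `{|g(·,y)| > N}` is thus covered by
finitely many Kato balls of radius `r`, the number of balls not depending on `y`, and the Kato
condition makes the total contribution small as `r → 0`.
-/

open MeasureTheory Metric Filter Topology Set
open scoped ENNReal

noncomputable def katoModulus (M b : ℝ → ℝ) (r : ℝ) : ℝ≥0∞ :=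
  ⨆ x : ℝ, ∫⁻ z in Ioo (x - r) (x + r), ENNReal.ofReal (M |x - z| * |b z|)

lemma AntitoneOn.measurable_comp_abs_sub {M : ℝ → ℝ} (hM : AntitoneOn M (Ioi 0)) (x : ℝ) :
    Measurable fun z => M |x - z| := by
  refine measurable_of_measurable_on_compl_singleton x ?_
  have hanti : Antitone fun s : Ioi (0 : ℝ) => M s := fun s t hst => hM s.2 t.2 hst
  have hdist : Measurable fun w : ({x}ᶜ : Set ℝ) =>
      (⟨|x - w|, abs_pos.2 (sub_ne_zero.2 (Ne.symm w.2))⟩ : Ioi (0 : ℝ)) :=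
    (measurable_const.sub measurable_subtype_coe).abs.subtype_mk
  exact hanti.measurable.comp hdist

section Kato

variable {M b : ℝ → ℝ}

lemma lintegral_Ioo_le_katoModulus (x r : ℝ) :
    ∫⁻ z in Ioo (x - r) (x + r), ENNReal.ofReal (M |x - z| * |b z|) ≤ katoModulus M b r :=
  le_iSup (fun x => ∫⁻ z in Ioo (x - r) (x + r), ENNReal.ofReal (M |x - z| * |b z|)) x

lemma setLIntegral_le_card_mul_katoModulus (hM : AntitoneOn M (Ioi 0)) (hb : Measurable b)
    {S : Set ℝ} {u : ℝ → ℝ≥0∞} {F : Finset ℝ} {C : ℝ≥0∞} {r : ℝ}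
    (hu : ∀ᵐ z ∂volume.restrict S,
      ∃ e ∈ F, |e - z| < r ∧ u z ≤ C * ENNReal.ofReal (M |e - z| * |b z|)) :
    ∫⁻ z in S, u z ≤ C * (F.card * katoModulus M b r) := by
  set kernel : ℝ → ℝ → ℝ≥0∞ := fun e =>
    (Ioo (e - r) (e + r)).indicator fun z => ENNReal.ofReal (M |e - z| * |b z|)
  have hmeas : ∀ e, Measurable (kernel e) := fun e =>
    ((hM.measurable_comp_abs_sub e).mul hb.abs).ennreal_ofReal.indicator measurableSet_Ioo
  calc ∫⁻ z in S, u z ≤ ∫⁻ z in S, C * ∑ e ∈ F, kernel e z := by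
        refine lintegral_mono_ae (hu.mono fun z ⟨e, heF, hez, hue⟩ => hue.trans ?_)
        gcongr
        refine le_trans (le_of_eq ?_) (Finset.single_le_sum (fun _ _ => zero_le) heF)
        have hz : z ∈ Ioo (e - r) (e + r) := by
          obtain ⟨h₁, h₂⟩ := abs_sub_lt_iff.1 hez
          constructor <;> linarith
        simp only [kernel, indicator_of_mem hz]
    _ ≤ ∫⁻ z, C * ∑ e ∈ F, kernel e z := setLIntegral_le_lintegral _ _
    _ = C * ∑ e ∈ F, ∫⁻ z, kernel e z := by
        rw [lintegral_const_mul _ (Finset.measurable_sum _ fun e _ => hmeas e),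
          lintegral_finsetSum _ fun e _ => hmeas e]
    _ ≤ C * ∑ _e ∈ F, katoModulus M b r := by
        gcongr with e he
        rw [lintegral_indicator measurableSet_Ioo]
        exact lintegral_Ioo_le_katoModulus e r
    _ = C * (F.card * katoModulus M b r) := by rw [Finset.sum_const, nsmul_eq_mul]

end Kato

lemma exists_endpoint_abs_sub_le_infDist {a b z : ℝ} {s : Set ℝ} (hs : s.Nonempty)
    (hsab : s ⊆ (Ioo a b)ᶜ) (hz : z ∈ Ioo a b) :
    ∃ e, (e = a ∨ e = b) ∧ 0 < |e - z| ∧ |e - z| ≤ infDist z s := by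
  obtain ⟨hza, hzb⟩ := hz
  have hmin : min (z - a) (b - z) ≤ infDist z s := by
    refine (le_infDist hs).2 fun w hw => ?_
    have hw' : w ≤ a ∨ b ≤ w := by
      by_contra! h
      exact hsab hw ⟨h.1, h.2⟩
    rw [Real.dist_eq]
    rcases hw' with h | h
    · exact (min_le_left _ _).trans ((sub_le_sub_left h z).trans (le_abs_self _))
    · exact (min_le_right _ _).trans
        ((sub_le_sub_right h z).trans (abs_sub_comm z w ▸ le_abs_self _))
  rcases le_total (z - a) (b - z) with h | h
  · have hdist : |a - z| = z - a := by rw [abs_sub_comm, abs_of_pos (sub_pos.2 hza)]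
    exact ⟨a, Or.inl rfl, by linarith, by rwa [hdist, ← min_eq_left h]⟩
  · have hdist : |b - z| = b - z := abs_of_pos (sub_pos.2 hzb)
    exact ⟨b, Or.inr rfl, by linarith, by rwa [hdist, ← min_eq_right h]⟩

lemma nonempty_compl_iUnion_Ioo {ι : Type*} [Finite ι] (p q : ι → ℝ) :
    (⋃ i, Ioo (p i) (q i))ᶜ.Nonempty := by
  obtain ⟨m, hm⟩ := (Bornology.isBounded_iUnion.2 fun i => isBounded_Ioo (p i) (q i)).bddAbove
  exact ⟨m + 1, fun h => by linarith [hm h]⟩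

lemma exists_endpoint_abs_sub_le_infDist_compl_iUnion {ι : Type*} [Fintype ι] {p q : ι → ℝ}
    {z : ℝ} (hz : z ∈ ⋃ i, Ioo (p i) (q i)) :
    ∃ e ∈ Finset.univ.image p ∪ Finset.univ.image q,
      0 < |e - z| ∧ |e - z| ≤ infDist z (⋃ i, Ioo (p i) (q i))ᶜ := by
  obtain ⟨i, hi⟩ := mem_iUnion.1 hz
  obtain ⟨e, he, hpos, hle⟩ :=
    exists_endpoint_abs_sub_le_infDist (nonempty_compl_iUnion_Ioo p q)
    (compl_subset_compl.2 (subset_iUnion (fun i => Ioo (p i) (q i)) i)) hi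
  refine ⟨e, ?_, hpos, hle⟩
  rcases he with rfl | rfl
  · exact Finset.mem_union_left _ (Finset.mem_image_of_mem p (Finset.mem_univ i))
  · exact Finset.mem_union_right _ (Finset.mem_image_of_mem q (Finset.mem_univ i))

lemma exists_singularity_near {M : ℝ → ℝ} (hM : AntitoneOn M (Ioi 0))
    (hMnonneg : ∀ s, 0 < s → 0 ≤ M s) {A N r δ t y z : ℝ} {E : Finset ℝ} (hr : 0 < r)
    (hN : max A 0 * M r ≤ N) (hNt : N < t) (ht : t ≤ A * M (min δ |z - y|)) (hzy : z ≠ y)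
    (hE : ∃ e ∈ E, 0 < |e - z| ∧ |e - z| ≤ δ) :
    ∃ e ∈ insert y E, |e - z| < r ∧ t ≤ max A 0 * M |e - z| := by
  obtain ⟨e, he, hepos, heδ⟩ := hE
  set d := min δ |z - y|
  have hdpos : 0 < d := lt_min (hepos.trans_le heδ) (abs_pos.2 (sub_ne_zero.2 hzy))
  have ht' : t ≤ max A 0 * M d :=
    ht.trans (mul_le_mul_of_nonneg_right (le_max_left A 0) (hMnonneg d hdpos))
  have hdr : d < r := by
    by_contra! hrd
    have := mul_le_mul_of_nonneg_left (hM hr hdpos hrd) (le_max_right A 0)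
    linarith
  rcases le_total δ |z - y| with h | h
  · have hδ : d = δ := min_eq_left h
    refine ⟨e, Finset.mem_insert_of_mem he, by linarith, ht'.trans ?_⟩
    exact mul_le_mul_of_nonneg_left (hM hepos hdpos (hδ ▸ heδ)) (le_max_right A 0)
  · have hy : d = |y - z| := (min_eq_right h).trans (abs_sub_comm z y)
    exact ⟨y, Finset.mem_insert_self y E, hy ▸ hdr, hy ▸ ht'⟩

lemma ENNReal.tendsto_nhds_zero_of_eventually_le {ι κ : Type*} {Φ : κ → ℝ≥0∞}
    {T : ι → ℝ≥0∞} {l : Filter ι} [l.NeBot] {l' : Filter κ} (hT : Tendsto T l (𝓝 0))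
    (hΦ : ∀ᶠ r in l, ∀ᶠ N in l', Φ N ≤ T r) :
    Tendsto Φ l' (𝓝 0) := by
  refine ENNReal.tendsto_nhds_zero.2 fun ε hε => ?_
  obtain ⟨r, hrε, hr⟩ := ((hT.eventually (gt_mem_nhds hε)).and hΦ).exists
  exact hr.mono fun N hN => hN.trans hrε.le

lemma setLIntegral_abs_gt_le_katoModulus {ι : Type*} [Fintype ι] {p q : ι → ℝ}
    {M b f : ℝ → ℝ} (hM : AntitoneOn M (Ioi 0)) (hMnonneg : ∀ s, 0 < s → 0 ≤ M s) (hb : Measurable b)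
    (hf : Measurable f) {A N r y : ℝ} (hr : 0 < r) (hN : max A 0 * M r ≤ N)
    (hf0 : ∀ z ∉ ⋃ i, Ioo (p i) (q i), f z = 0)
    (hfbd : ∀ z ∈ ⋃ i, Ioo (p i) (q i), z ≠ y →
      |f z| ≤ A * M (min (infDist z (⋃ i, Ioo (p i) (q i))ᶜ) |z - y|)) :
    ∫⁻ z in {z | N < |f z|}, ENNReal.ofReal (|f z| * |b z|) ≤
      ENNReal.ofReal (max A 0) * ((Finset.univ.image p ∪ Finset.univ.image q).card + 1) *
        katoModulus M b r := by
  set E := Finset.univ.image p ∪ Finset.univ.image q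
  have hN0 : 0 ≤ N := (mul_nonneg (le_max_right A 0) (hMnonneg r hr)).trans hN
  calc ∫⁻ z in {z | N < |f z|}, ENNReal.ofReal (|f z| * |b z|)
      ≤ ENNReal.ofReal (max A 0) * ((insert y E).card * katoModulus M b r) := by
        refine setLIntegral_le_card_mul_katoModulus hM hb ?_
        filter_upwards [ae_restrict_mem (measurableSet_lt measurable_const hf.abs),
          ae_restrict_of_ae (volume.ae_ne y)] with z (hNz : N < |f z|) hzy
        have hzD : z ∈ ⋃ i, Ioo (p i) (q i) := by
          by_contra hz
          rw [hf0 z hz, abs_zero] at hNz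
          linarith
        obtain ⟨e, he, her, hfe⟩ := exists_singularity_near hM hMnonneg hr hN hNz
          (hfbd z hzD hzy) hzy (exists_endpoint_abs_sub_le_infDist_compl_iUnion hzD)
        refine ⟨e, he, her, ?_⟩
        rw [← ENNReal.ofReal_mul (le_max_right A 0), ← mul_assoc]
        exact ENNReal.ofReal_le_ofReal (mul_le_mul_of_nonneg_right hfe (abs_nonneg _))
    _ ≤ _ := by
        rw [mul_assoc]
        gcongr
        exact_mod_cast Finset.card_insert_le y E

theorem statement13_general (V M : ℝ → ℝ)
    (hM : ∀ r : ℝ, 0 < r → M r = V r ^ 2 / r ^ 2)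
    (hMdec : ∀ r s : ℝ, 0 < r → r ≤ s → M s ≤ M r)
    (k : ℕ) (p q : Fin k → ℝ)
    (D : Set ℝ) (hD : D = ⋃ i, Set.Ioo (p i) (q i))
    (b : ℝ → ℝ) (hb : Measurable b)
    (hKato : Tendsto (fun r : ℝ => ⨆ x : ℝ, ∫⁻ z in Set.Ioo (x - r) (x + r),
        ENNReal.ofReal (M |x - z| * |b z|)) (𝓝[>] 0) (𝓝 0))
    (g : ℝ → ℝ → ℝ) (hgmeas : Measurable (Function.uncurry g))
    (A : ℝ)
    (hg0 : ∀ z y : ℝ, z ∉ D → g z y = 0)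
    (hgbd : ∀ z ∈ D, ∀ y : ℝ, z ≠ y →
      |g z y| ≤ A * M (min (infDist z Dᶜ) |z - y|)) :
    Tendsto (fun N : ℝ => ⨆ y : ℝ, ∫⁻ z in {z : ℝ | N < |g z y|},
        ENNReal.ofReal (|g z y| * |b z|)) atTop (𝓝 0) := by
  subst hD
  have hManti : AntitoneOn M (Ioi 0) := fun r hr s _ hrs => hMdec r s hr hrs
  have hMnonneg : ∀ r, 0 < r → 0 ≤ M r := fun r hr => by rw [hM r hr]; positivity
  set C : ℝ≥0∞ :=
    ENNReal.ofReal (max A 0) * ((Finset.univ.image p ∪ Finset.univ.image q).card + 1)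
  have hC : C ≠ ⊤ := ENNReal.mul_ne_top ENNReal.ofReal_ne_top (by simp)
  have hKato' : Tendsto (katoModulus M b) (𝓝[>] 0) (𝓝 0) := hKato
  have hCKato : Tendsto (fun r => C * katoModulus M b r) (𝓝[>] 0) (𝓝 0) := by
    simpa using ENNReal.Tendsto.const_mul hKato' (Or.inr hC)
  refine ENNReal.tendsto_nhds_zero_of_eventually_le hCKato ?_
  filter_upwards [self_mem_nhdsWithin] with r (hr : 0 < r)
  filter_upwards [eventually_ge_atTop (max A 0 * M r)] with N hN
  exact iSup_le fun y => setLIntegral_abs_gt_le_katoModulus hManti hMnonneg hb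
    (hgmeas.comp (measurable_id.prodMk measurable_const)) hr hN (fun z hz => hg0 z y hz)
    (fun z hz hzy => hgbd z hz y hzy)

/-- Uniform integrability against |b(z)|dz: if |g(z,y)| ≤ A·M(δ_z ∧ |z−y|)
on D (with g vanishing off D), M = V²/r² non-increasing blowing up at 0, and b is in the
Kato class for M, then lim_{N→∞} sup_y ∫_{|g(·,y)|>N} |g(z,y)||b(z)| dz = 0. -/
theorem statement13 (V M : ℝ → ℝ)
    (hVpos : ∀ r : ℝ, 0 < r → 0 < V r)
    (hVmono : ∀ r s : ℝ, 0 < r → r ≤ s → V r ≤ V s)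
    (hM : ∀ r : ℝ, 0 < r → M r = V r ^ 2 / r ^ 2)
    (hMdec : ∀ r s : ℝ, 0 < r → r ≤ s → M s ≤ M r)
    (hMtop : Tendsto M (𝓝[>] 0) atTop)
    (k : ℕ) (p q : Fin k → ℝ) (hpq : ∀ i, p i < q i)
    (hdisj : ∀ i j : Fin k, i < j → q i ≤ p j)
    (D : Set ℝ) (hD : D = ⋃ i, Set.Ioo (p i) (q i))
    (b : ℝ → ℝ) (hb : Measurable b)
    (hKato : Tendsto (fun r : ℝ => ⨆ x : ℝ, ∫⁻ z in Set.Ioo (x - r) (x + r),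
        ENNReal.ofReal (M |x - z| * |b z|)) (𝓝[>] 0) (𝓝 0))
    (g : ℝ → ℝ → ℝ) (hgmeas : Measurable (Function.uncurry g))
    (A : ℝ)
    (hg0 : ∀ z y : ℝ, z ∉ D → g z y = 0)
    (hgbd : ∀ z ∈ D, ∀ y : ℝ, z ≠ y →
      |g z y| ≤ A * M (min (infDist z Dᶜ) |z - y|)) :
    Tendsto (fun N : ℝ => ⨆ y : ℝ, ∫⁻ z in {z : ℝ | N < |g z y|},
        ENNReal.ofReal (|g z y| * |b z|)) atTop (𝓝 0) :=
  statement13_general V M hM hMdec k p q D hD b hb hKato g hgmeas A hg0 hgbd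
end

section
/- Let D ⊊ ℝ be a nonempty open set, δ_w = dist(w, Dᶜ), let V : (0,∞) → (0,∞) be any positive function, define g(x,y) = V(δ_x)V(δ_y)·min( (δ_x δ_y)^{-1/2}, |x−y|^{-1} ) for x, y ∈ D, and let G : D × D → (0,∞) satisfy C₂⁻¹ g(x,y) ≤ G(x,y) ≤ C₂ g(x,y) for all x, y ∈ D and some constant C₂ ≥ 1. Then there is a constant C, depending only on C₂, such that for all x, y, z ∈ D: G(x,z) G(z,y) / G(x,y) ≤ C · V(δ_z) · max( G(x,z)/V(δ_x), G(z,y)/V(δ_y) ). -/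
open Metric

/-- Arithmetic core of the 3G inequality (case where `m x z ≤ m z y`). -/
lemma statement14_core (C₂ Vx Vy Vz Gxy Gxz Gzy mxy mzy : ℝ)
    (hC : 0 < C₂) (hVx : 0 < Vx) (hVz : 0 < Vz)
    (hGxy : 0 < Gxy) (hGxz : 0 < Gxz)
    (hmzy : 0 < mzy)
    (hu2 : Gzy * mzy ≤ C₂ * (Vz * Vy))
    (hl1 : Vx * Vy ≤ C₂ * (Gxy * mxy))
    (hm : mxy ≤ 2 * mzy) :
    Gxz * Gzy / Gxy ≤ 2 * C₂ ^ 2 * Vz * (Gxz / Vx) := by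
  rw [div_le_iff₀ hGxy, show 2 * C₂ ^ 2 * Vz * (Gxz / Vx) * Gxy
      = 2 * C₂ ^ 2 * Vz * Gxz * Gxy / Vx by ring, le_div_iff₀ hVx]
  apply le_of_mul_le_mul_right _ hmzy
  calc Gxz * Gzy * Vx * mzy = (Gzy * mzy) * (Gxz * Vx) := by ring
    _ ≤ (C₂ * (Vz * Vy)) * (Gxz * Vx) := by gcongr
    _ = (C₂ * Vz * Gxz) * (Vx * Vy) := by ring
    _ ≤ (C₂ * Vz * Gxz) * (C₂ * (Gxy * mxy)) := by gcongr
    _ = (C₂ ^ 2 * Vz * Gxz * Gxy) * mxy := by ring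
    _ ≤ (C₂ ^ 2 * Vz * Gxz * Gxy) * (2 * mzy) := by gcongr
    _ = 2 * C₂ ^ 2 * Vz * Gxz * Gxy * mzy := by ring

/-- If `dx ≤ dz + a` (Lipschitz property of the distance to the complement),
then `dx ≤ 2 * max √(dx·dz) a`. -/
lemma statement14_delta_le (dx dz a : ℝ) (hdx : 0 ≤ dx) (ha : 0 ≤ a)
    (hlip : dx ≤ dz + a) : dx ≤ 2 * max (Real.sqrt (dx * dz)) a := by
  rcases le_or_gt dx (2 * a) with h | h
  · calc dx ≤ 2 * a := h
      _ ≤ 2 * max (Real.sqrt (dx * dz)) a := by gcongr; exact le_max_right _ _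
  · have h1 : dx / 2 ≤ dz := by linarith
    have h2 : dx / 2 ≤ Real.sqrt (dx * dz) := by
      rw [show dx / 2 = Real.sqrt ((dx / 2) ^ 2) by
        rw [Real.sqrt_sq (by linarith)]]
      apply Real.sqrt_le_sqrt
      nlinarith
    have := le_max_left (Real.sqrt (dx * dz)) a
    linarith

/-- 3G-type inequality. If G is comparable with the profile
g(x,y) = V(δ_x)V(δ_y)/max(√(δ_xδ_y), |x−y|)  (= V(δ_x)V(δ_y)·min(1/√(δ_xδ_y), 1/|x−y|)),
then G(x,z)G(z,y)/G(x,y) ≤ C·V(δ_z)·max(G(x,z)/V(δ_x), G(z,y)/V(δ_y)). -/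
theorem statement14 (D : Set ℝ) (hDopen : IsOpen D) (hDne : D.Nonempty)
    (hDuniv : D ≠ Set.univ)
    (V : ℝ → ℝ) (hVpos : ∀ r : ℝ, 0 < r → 0 < V r)
    (G : ℝ → ℝ → ℝ) (C₂ : ℝ) (hC₂ : 1 ≤ C₂)
    (hGpos : ∀ x ∈ D, ∀ y ∈ D, 0 < G x y)
    (hGlow : ∀ x ∈ D, ∀ y ∈ D,
      C₂⁻¹ * (V (infDist x Dᶜ) * V (infDist y Dᶜ) *
        (max (Real.sqrt (infDist x Dᶜ * infDist y Dᶜ)) |x - y|)⁻¹) ≤ G x y)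
    (hGup : ∀ x ∈ D, ∀ y ∈ D,
      G x y ≤ C₂ * (V (infDist x Dᶜ) * V (infDist y Dᶜ) *
        (max (Real.sqrt (infDist x Dᶜ * infDist y Dᶜ)) |x - y|)⁻¹)) :
    ∃ C : ℝ, 0 < C ∧ ∀ x ∈ D, ∀ y ∈ D, ∀ z ∈ D,
      G x z * G z y / G x y ≤
        C * V (infDist z Dᶜ) *
          max (G x z / V (infDist x Dᶜ)) (G z y / V (infDist y Dᶜ)) := by
  have hC₂0 : 0 < C₂ := lt_of_lt_of_le one_pos hC₂
  -- the complement is nonempty and closed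
  obtain ⟨w, hw⟩ := Set.ne_univ_iff_exists_notMem D |>.mp hDuniv
  have hcne : (Dᶜ).Nonempty := ⟨w, hw⟩
  have hccl : IsClosed (Dᶜ) := hDopen.isClosed_compl
  -- distance to the complement is positive on D
  have hδpos : ∀ x ∈ D, 0 < infDist x Dᶜ := by
    intro x hx
    exact (hccl.notMem_iff_infDist_pos hcne).mp (by simpa using hx)
  -- abbreviation for the "max" quantity
  set m : ℝ → ℝ → ℝ := fun a b =>
    max (Real.sqrt (infDist a Dᶜ * infDist b Dᶜ)) |a - b| with hm_def
  have hmpos : ∀ a ∈ D, ∀ b ∈ D, 0 < m a b := by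
    intro a ha b hb
    have := Real.sqrt_pos.mpr (mul_pos (hδpos a ha) (hδpos b hb))
    exact lt_max_of_lt_left this
  -- converted comparability bounds
  have hup' : ∀ a ∈ D, ∀ b ∈ D, G a b * m a b ≤ C₂ * (V (infDist a Dᶜ) * V (infDist b Dᶜ)) := by
    intro a ha b hb
    have h := mul_le_mul_of_nonneg_right (hGup a ha b hb) (hmpos a ha b hb).le
    calc G a b * m a b ≤ C₂ * (V (infDist a Dᶜ) * V (infDist b Dᶜ) * (m a b)⁻¹) * m a b := h
      _ = C₂ * (V (infDist a Dᶜ) * V (infDist b Dᶜ)) := by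
          have hm0 : m a b ≠ 0 := (hmpos a ha b hb).ne'
          field_simp
  have hlow' : ∀ a ∈ D, ∀ b ∈ D,
      V (infDist a Dᶜ) * V (infDist b Dᶜ) ≤ C₂ * (G a b * m a b) := by
    intro a ha b hb
    have h := mul_le_mul_of_nonneg_right (hGlow a ha b hb) (hmpos a ha b hb).le
    have h2 : C₂⁻¹ * (V (infDist a Dᶜ) * V (infDist b Dᶜ)) ≤ G a b * m a b := by
      calc C₂⁻¹ * (V (infDist a Dᶜ) * V (infDist b Dᶜ))
          = C₂⁻¹ * (V (infDist a Dᶜ) * V (infDist b Dᶜ) * (m a b)⁻¹) * m a b := by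
            have hm0 : m a b ≠ 0 := (hmpos a ha b hb).ne'
            field_simp
        _ ≤ G a b * m a b := h
    have h3 := mul_le_mul_of_nonneg_left h2 hC₂0.le
    calc V (infDist a Dᶜ) * V (infDist b Dᶜ)
        = C₂ * (C₂⁻¹ * (V (infDist a Dᶜ) * V (infDist b Dᶜ))) := by
          field_simp
      _ ≤ C₂ * (G a b * m a b) := h3
  -- δ_x ≤ 2 m(x,z)
  have hδm : ∀ a ∈ D, ∀ b : ℝ, infDist a Dᶜ ≤ 2 * m a b := by
    intro a ha b
    apply statement14_delta_le _ _ _ (infDist_nonneg) (abs_nonneg _)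
    have := infDist_le_infDist_add_dist (x := a) (y := b) (s := Dᶜ)
    rwa [Real.dist_eq] at this
  -- triangle-type inequality for m
  have hmtri : ∀ x ∈ D, ∀ y ∈ D, ∀ z ∈ D, m x y ≤ 2 * max (m x z) (m z y) := by
    intro x hx y hy z hz
    apply max_le
    · have h1 : infDist x Dᶜ ≤ 2 * m x z := hδm x hx z
      have h2 : infDist y Dᶜ ≤ 2 * m z y := by
        have := hδm y hy z
        calc infDist y Dᶜ ≤ 2 * m y z := this
          _ = 2 * m z y := by
              simp only [hm_def, mul_comm (infDist y Dᶜ), abs_sub_comm y z]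
      calc Real.sqrt (infDist x Dᶜ * infDist y Dᶜ)
          ≤ Real.sqrt ((2 * m x z) * (2 * m z y)) := by
            apply Real.sqrt_le_sqrt
            apply mul_le_mul h1 h2 infDist_nonneg
            positivity
        _ ≤ Real.sqrt ((2 * max (m x z) (m z y)) * (2 * max (m x z) (m z y))) := by
            apply Real.sqrt_le_sqrt
            have hx0 : (0:ℝ) < m x z := hmpos x hx z hz
            have hy0 : (0:ℝ) < m z y := hmpos z hz y hy
            have := le_max_left (m x z) (m z y)
            have := le_max_right (m x z) (m z y)
            nlinarith
        _ = 2 * max (m x z) (m z y) := by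
            rw [Real.sqrt_mul_self (by positivity)]
    · have h1 : |x - z| ≤ m x z := le_max_right _ _
      have h2 : |z - y| ≤ m z y := le_max_right _ _
      calc |x - y| ≤ |x - z| + |z - y| := abs_sub_le x z y
        _ ≤ m x z + m z y := add_le_add h1 h2
        _ ≤ 2 * max (m x z) (m z y) := by
            have := le_max_left (m x z) (m z y)
            have := le_max_right (m x z) (m z y)
            linarith
  refine ⟨2 * C₂ ^ 2, by positivity, ?_⟩
  intro x hx y hy z hz
  have hVx := hVpos _ (hδpos x hx)
  have hVy := hVpos _ (hδpos y hy)
  have hVz := hVpos _ (hδpos z hz)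
  rcases le_total (m x z) (m z y) with hcase | hcase
  · -- use the term G x z / V δ_x
    have hmx : m x y ≤ 2 * m z y := by
      have := hmtri x hx y hy z hz
      rwa [max_eq_right hcase] at this
    have hkey := statement14_core C₂ (V (infDist x Dᶜ)) (V (infDist y Dᶜ)) (V (infDist z Dᶜ))
      (G x y) (G x z) (G z y) (m x y) (m z y)
      hC₂0 hVx hVz (hGpos x hx y hy) (hGpos x hx z hz) (hmpos z hz y hy)
      (hup' z hz y hy) (hlow' x hx y hy) hmx
    calc G x z * G z y / G x y ≤ 2 * C₂ ^ 2 * V (infDist z Dᶜ) * (G x z / V (infDist x Dᶜ)) := hkey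
      _ ≤ 2 * C₂ ^ 2 * V (infDist z Dᶜ) *
          max (G x z / V (infDist x Dᶜ)) (G z y / V (infDist y Dᶜ)) := by
          gcongr
          exact le_max_left _ _
  · -- use the term G z y / V δ_y
    have hmx : m x y ≤ 2 * m x z := by
      have := hmtri x hx y hy z hz
      rwa [max_eq_left hcase] at this
    have hxz' : G x z * m x z ≤ C₂ * (V (infDist z Dᶜ) * V (infDist x Dᶜ)) := by
      have := hup' x hx z hz
      linarith [this, mul_comm (V (infDist x Dᶜ)) (V (infDist z Dᶜ))]
    have hlow'' : V (infDist y Dᶜ) * V (infDist x Dᶜ) ≤ C₂ * (G x y * m x y) := by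
      have := hlow' x hx y hy
      rwa [mul_comm (V (infDist y Dᶜ))]
    have hkey := statement14_core C₂ (V (infDist y Dᶜ)) (V (infDist x Dᶜ)) (V (infDist z Dᶜ))
      (G x y) (G z y) (G x z) (m x y) (m x z)
      hC₂0 hVy hVz (hGpos x hx y hy) (hGpos z hz y hy) (hmpos x hx z hz)
      hxz' hlow'' hmx
    calc G x z * G z y / G x y = G z y * G x z / G x y := by ring
      _ ≤ 2 * C₂ ^ 2 * V (infDist z Dᶜ) * (G z y / V (infDist y Dᶜ)) := hkey
      _ ≤ 2 * C₂ ^ 2 * V (infDist z Dᶜ) *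
          max (G x z / V (infDist x Dᶜ)) (G z y / V (infDist y Dᶜ)) := by
          gcongr
          exact le_max_right _ _
end

section
/- Let D ⊊ ℝ be a nonempty open set and for w ∈ D write δ_w = dist(w, Dᶜ). Then for all x, y, z ∈ D with x ≠ z, z ≠ y, x ≠ y: min( min( (δ_x δ_z)^{-1/2}, |x−z|^{-1} ), min( (δ_z δ_y)^{-1/2}, |z−y|^{-1} ) ) ≤ 2 · min( (δ_x δ_y)^{-1/2}, |x−y|^{-1} ). -/
open Metric

lemma min_inv_eq_max_inv (a b : ℝ) (ha : 0 < a) (hb : 0 < b) :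
    min a⁻¹ b⁻¹ = (max a b)⁻¹ := by
  rcases le_total a b with h | h
  · rw [max_eq_right h, min_eq_right (inv_anti₀ ha h)]
  · rw [max_eq_left h, min_eq_left (inv_anti₀ hb h)]

/-- The elementary core of the 3G inequality for the normalized
Green-function profile 𝒢(x,y) = min(1/√(δ_xδ_y), 1/|x−y|):
min(𝒢(x,z), 𝒢(z,y)) ≤ 2·𝒢(x,y). -/
theorem statement15 (D : Set ℝ) (hDopen : IsOpen D) (hDne : D.Nonempty)
    (hDuniv : D ≠ Set.univ)
    (x y z : ℝ) (hx : x ∈ D) (hy : y ∈ D) (hz : z ∈ D)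
    (hxz : x ≠ z) (hzy : z ≠ y) (hxy : x ≠ y) :
    min (min (Real.sqrt (infDist x Dᶜ * infDist z Dᶜ))⁻¹ |x - z|⁻¹)
        (min (Real.sqrt (infDist z Dᶜ * infDist y Dᶜ))⁻¹ |z - y|⁻¹) ≤
      2 * min (Real.sqrt (infDist x Dᶜ * infDist y Dᶜ))⁻¹ |x - y|⁻¹ := by
  have hcne : Dᶜ.Nonempty := Set.nonempty_compl.mpr hDuniv
  have hcl : IsClosed Dᶜ := hDopen.isClosed_compl
  set dx := infDist x Dᶜ with hdx
  set dy := infDist y Dᶜ with hdy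
  set dz := infDist z Dᶜ with hdz
  have hdxp : 0 < dx := (hcl.notMem_iff_infDist_pos hcne).1 (by simpa using hx)
  have hdyp : 0 < dy := (hcl.notMem_iff_infDist_pos hcne).1 (by simpa using hy)
  have hdzp : 0 < dz := (hcl.notMem_iff_infDist_pos hcne).1 (by simpa using hz)
  have hxz' : (0:ℝ) < |x - z| := abs_pos.mpr (sub_ne_zero.mpr hxz)
  have hzy' : (0:ℝ) < |z - y| := abs_pos.mpr (sub_ne_zero.mpr hzy)
  have hxy' : (0:ℝ) < |x - y| := abs_pos.mpr (sub_ne_zero.mpr hxy)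
  have hsxz : 0 < Real.sqrt (dx * dz) := Real.sqrt_pos.mpr (by positivity)
  have hszy : 0 < Real.sqrt (dz * dy) := Real.sqrt_pos.mpr (by positivity)
  have hsxy : 0 < Real.sqrt (dx * dy) := Real.sqrt_pos.mpr (by positivity)
  set a := Real.sqrt (dx * dz)
  set c := Real.sqrt (dz * dy)
  set u := Real.sqrt (dx * dy)
  set M := max (max a |x - z|) (max c |z - y|) with hM
  have hMpos : 0 < M := lt_of_lt_of_le hxz' (le_trans (le_max_right _ _) (le_max_left _ _))
  rw [min_inv_eq_max_inv a _ hsxz hxz', min_inv_eq_max_inv c _ hszy hzy',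
    min_inv_eq_max_inv _ _ (lt_of_lt_of_le hsxz (le_max_left _ _)) (lt_of_lt_of_le hszy (le_max_left _ _)),
    min_inv_eq_max_inv u _ hsxy hxy']
  -- goal: M⁻¹ ≤ 2 * (max u |x-y|)⁻¹
  have hNpos : 0 < max u |x - y| := lt_of_lt_of_le hxy' (le_max_right _ _)
  rw [show (2:ℝ) * (max u |x - y|)⁻¹ = (max u |x - y| / 2)⁻¹ by
    rw [inv_div]; ring]
  apply inv_anti₀ (by positivity)
  rw [div_le_iff₀ (by norm_num)]
  -- goal: max u |x-y| ≤ M * 2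
  have haM : a ≤ M := le_trans (le_max_left _ _) (le_max_left _ _)
  have hbM : |x - z| ≤ M := le_trans (le_max_right _ _) (le_max_left _ _)
  have hcM : c ≤ M := le_trans (le_max_left _ _) (le_max_right _ _)
  have hdM : |z - y| ≤ M := le_trans (le_max_right _ _) (le_max_right _ _)
  have haa : dx * dz ≤ M ^ 2 := by
    have := Real.sq_sqrt (mul_nonneg hdxp.le hdzp.le)
    nlinarith [hsxz.le]
  have hcc : dz * dy ≤ M ^ 2 := by
    have := Real.sq_sqrt (mul_nonneg hdzp.le hdyp.le)
    nlinarith [hszy.le]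
  -- Lipschitz estimates
  have lip1 : dx ≤ dz + |x - z| := by
    have := infDist_le_infDist_add_dist (x := x) (y := z) (s := Dᶜ)
    rwa [Real.dist_eq] at this
  have lip2 : dy ≤ dz + |z - y| := by
    have := infDist_le_infDist_add_dist (x := y) (y := z) (s := Dᶜ)
    rw [Real.dist_eq] at this
    rwa [abs_sub_comm] at this
  have key : dx * dy ≤ 4 * M ^ 2 := by
    rcases le_total dz M with hzM | hzM
    · have h1 : dx ≤ 2 * M := le_trans lip1 (by linarith)
      have h2 : dy ≤ 2 * M := le_trans lip2 (by linarith)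
      calc dx * dy ≤ (2 * M) * (2 * M) :=
            mul_le_mul h1 h2 hdyp.le (by positivity)
        _ = 4 * M ^ 2 := by ring
    · have h1 : dx ≤ M := by
        have h : dx * M ≤ M ^ 2 :=
          le_trans (mul_le_mul_of_nonneg_left hzM hdxp.le) haa
        nlinarith
      have h2 : dy ≤ M := by
        have h : dy * M ≤ M ^ 2 := by
          have := mul_le_mul_of_nonneg_right hzM hdyp.le
          nlinarith
        nlinarith
      calc dx * dy ≤ M * M := mul_le_mul h1 h2 hdyp.le hMpos.le
        _ ≤ 4 * M ^ 2 := by nlinarith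
  apply max_le
  · have : u ≤ Real.sqrt (4 * M ^ 2) := Real.sqrt_le_sqrt key
    rwa [show (4:ℝ) * M ^ 2 = (M * 2) ^ 2 by ring,
      Real.sqrt_sq (by positivity)] at this
  · calc |x - y| ≤ |x - z| + |z - y| := abs_sub_le x z y
      _ ≤ M * 2 := by linarith
end

section
/- Let D ⊊ ℝ be a nonempty open set, δ_w = dist(w, Dᶜ), let V : (0,∞) → (0,∞), define g(x,y) = V(δ_x)V(δ_y)·min( (δ_x δ_y)^{-1/2}, |x−y|^{-1} ), and let G : D × D → (0,∞) satisfy C₂⁻¹ g ≤ G ≤ C₂ g on D × D for some C₂ ≥ 1. Then there is a constant C, depending only on C₂, such that for all x, y, z ∈ D: G(x,z) G(z,y) / G(x,y) ≤ C · V(δ_z)² / δ_z. -/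
open Metric

/-- δ is positive on D. -/
lemma delta_pos_of_mem {D : Set ℝ} (hDopen : IsOpen D) (hDuniv : D ≠ Set.univ)
    {x : ℝ} (hx : x ∈ D) : 0 < infDist x Dᶜ := by
  have hne : Dᶜ.Nonempty := Set.nonempty_compl.mpr hDuniv
  have hcl : IsClosed (Dᶜ) := hDopen.isClosed_compl
  rw [← hcl.notMem_iff_infDist_pos hne]
  simpa using hx

/-- Key elementary bound: δ_z ≤ 2·max(√(δ_x δ_z), |x−z|). -/
lemma key_bound {a c d : ℝ} (ha : 0 < a) (hc : 0 < c) (hd : 0 ≤ d)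
    (hlip : c ≤ a + d) : c ≤ 2 * max (Real.sqrt (a * c)) d := by
  rcases le_total a d with h | h
  · calc c ≤ a + d := hlip
      _ ≤ 2 * d := by linarith
      _ ≤ 2 * max (Real.sqrt (a * c)) d := by
          have := le_max_right (Real.sqrt (a * c)) d; linarith
  · have h1 : c ≤ 2 * a := by linarith
    have h2 : c ≤ 2 * Real.sqrt (a * c) := by
      have h5 : Real.sqrt (4 * (a * c)) = 2 * Real.sqrt (a * c) := by
        rw [show (4 : ℝ) * (a * c) = 2 ^ 2 * (a * c) by ring,
          Real.sqrt_mul (by positivity), Real.sqrt_sq (by norm_num)]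
      rw [← h5]
      calc c = Real.sqrt (c ^ 2) := (Real.sqrt_sq hc.le).symm
        _ ≤ Real.sqrt (4 * (a * c)) := Real.sqrt_le_sqrt (by nlinarith)
    have := le_max_left (Real.sqrt (a * c)) d
    linarith

/-- If G is comparable with the Green-function profile
g(x,y) = V(δ_x)V(δ_y)/max(√(δ_xδ_y), |x−y|), then
G(x,z)G(z,y)/G(x,y) ≤ C·V(δ_z)²/δ_z for all x, y, z ∈ D. -/
theorem statement16 (D : Set ℝ) (hDopen : IsOpen D) (hDne : D.Nonempty)
    (hDuniv : D ≠ Set.univ)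
    (V : ℝ → ℝ) (hVpos : ∀ r : ℝ, 0 < r → 0 < V r)
    (G : ℝ → ℝ → ℝ) (C₂ : ℝ) (hC₂ : 1 ≤ C₂)
    (hGpos : ∀ x ∈ D, ∀ y ∈ D, 0 < G x y)
    (hGlow : ∀ x ∈ D, ∀ y ∈ D,
      C₂⁻¹ * (V (infDist x Dᶜ) * V (infDist y Dᶜ) *
        (max (Real.sqrt (infDist x Dᶜ * infDist y Dᶜ)) |x - y|)⁻¹) ≤ G x y)
    (hGup : ∀ x ∈ D, ∀ y ∈ D,
      G x y ≤ C₂ * (V (infDist x Dᶜ) * V (infDist y Dᶜ) *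
        (max (Real.sqrt (infDist x Dᶜ * infDist y Dᶜ)) |x - y|)⁻¹)) :
    ∃ C : ℝ, 0 < C ∧ ∀ x ∈ D, ∀ y ∈ D, ∀ z ∈ D,
      G x z * G z y / G x y ≤ C * V (infDist z Dᶜ) ^ 2 / infDist z Dᶜ := by
  have hC₂pos : (0 : ℝ) < C₂ := by linarith
  refine ⟨4 * C₂ ^ 3, by positivity, ?_⟩
  intro x hx y hy z hz
  set a := infDist x Dᶜ with ha'
  set b := infDist y Dᶜ with hb'
  set c := infDist z Dᶜ with hc'
  have ha : 0 < a := delta_pos_of_mem hDopen hDuniv hx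
  have hb : 0 < b := delta_pos_of_mem hDopen hDuniv hy
  have hc : 0 < c := delta_pos_of_mem hDopen hDuniv hz
  have hVa : 0 < V a := hVpos a ha
  have hVb : 0 < V b := hVpos b hb
  have hVc : 0 < V c := hVpos c hc
  set Mxz := max (Real.sqrt (a * c)) |x - z| with hMxz'
  set Mzy := max (Real.sqrt (c * b)) |z - y| with hMzy'
  set Mxy := max (Real.sqrt (a * b)) |x - y| with hMxy'
  have hMxzpos : 0 < Mxz := lt_of_lt_of_le (Real.sqrt_pos.mpr (by positivity)) (le_max_left _ _)
  have hMzypos : 0 < Mzy := lt_of_lt_of_le (Real.sqrt_pos.mpr (by positivity)) (le_max_left _ _)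
  have hMxypos : 0 < Mxy := lt_of_lt_of_le (Real.sqrt_pos.mpr (by positivity)) (le_max_left _ _)
  -- Lipschitz bounds
  have hlip1 : c ≤ a + |x - z| := by
    have := infDist_le_infDist_add_dist (x := z) (y := x) (s := Dᶜ)
    rw [Real.dist_eq, abs_sub_comm] at this
    simpa [ha', hc'] using this
  have hlip2 : c ≤ b + |z - y| := by
    have := infDist_le_infDist_add_dist (x := z) (y := y) (s := Dᶜ)
    rw [Real.dist_eq] at this
    simpa [hb', hc'] using this
  have h1 : c ≤ 2 * Mxz := key_bound ha hc (abs_nonneg _) hlip1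
  have h2 : c ≤ 2 * Mzy := by
    have := key_bound hb hc (abs_nonneg _) hlip2
    have hcomm : Real.sqrt (b * c) = Real.sqrt (c * b) := by rw [mul_comm]
    rw [hcomm] at this
    exact this
  -- √(ab)·c ≤ Mxz·Mzy
  have h3 : Real.sqrt (a * b) * c ≤ Mxz * Mzy := by
    have : Real.sqrt (a * c) * Real.sqrt (c * b) = Real.sqrt (a * b) * c := by
      rw [← Real.sqrt_mul (by positivity),
        show a * c * (c * b) = (a * b) * c ^ 2 by ring,
        Real.sqrt_mul (by positivity), Real.sqrt_sq hc.le]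
    rw [← this]
    exact mul_le_mul (le_max_left _ _) (le_max_left _ _) (Real.sqrt_nonneg _) hMxzpos.le
  -- |x−y|·c ≤ 4 Mxz Mzy
  have h4 : |x - y| * c ≤ 4 * (Mxz * Mzy) := by
    have htri : |x - y| ≤ |x - z| + |z - y| := by
      have := abs_sub_abs_le_abs_sub x y  -- dummy
      calc |x - y| = |(x - z) + (z - y)| := by ring_nf
        _ ≤ |x - z| + |z - y| := abs_add_le _ _
    have hxz : |x - z| ≤ Mxz := le_max_right _ _
    have hzy : |z - y| ≤ Mzy := le_max_right _ _
    calc |x - y| * c ≤ (Mxz + Mzy) * c := by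
          apply mul_le_mul_of_nonneg_right _ hc.le; linarith
      _ ≤ Mxz * (2 * Mzy) + Mzy * (2 * Mxz) := by nlinarith
      _ = 4 * (Mxz * Mzy) := by ring
  have hMxyc : Mxy * c ≤ 4 * (Mxz * Mzy) := by
    rcases max_cases (Real.sqrt (a * b)) |x - y| with ⟨heq, _⟩ | ⟨heq, _⟩
    · rw [hMxy', heq]; nlinarith
    · rw [hMxy', heq]; exact h4
  -- comparability chain
  have hGxz := hGup x hx z hz
  have hGzy := hGup z hz y hy
  have hGxy := hGlow x hx y hy
  have hgxy_pos : 0 < C₂⁻¹ * (V a * V b * Mxy⁻¹) := by positivity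
  have step1 : G x z * G z y / G x y ≤
      (C₂ * (V a * V c * Mxz⁻¹)) * (C₂ * (V c * V b * Mzy⁻¹)) /
        (C₂⁻¹ * (V a * V b * Mxy⁻¹)) := by
    apply div_le_div₀ (by positivity)
    · exact mul_le_mul hGxz hGzy (hGpos z hz y hy).le (by positivity)
    · exact hgxy_pos
    · exact hGxy
  have step2 : (C₂ * (V a * V c * Mxz⁻¹)) * (C₂ * (V c * V b * Mzy⁻¹)) /
        (C₂⁻¹ * (V a * V b * Mxy⁻¹)) = C₂ ^ 3 * V c ^ 2 * (Mxy / (Mxz * Mzy)) := by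
    field_simp
  have step3 : Mxy / (Mxz * Mzy) ≤ 4 / c := by
    rw [div_le_div_iff₀ (by positivity) hc]
    nlinarith
  calc G x z * G z y / G x y ≤ C₂ ^ 3 * V c ^ 2 * (Mxy / (Mxz * Mzy)) := by
        rw [← step2]; exact step1
    _ ≤ C₂ ^ 3 * V c ^ 2 * (4 / c) := by
        apply mul_le_mul_of_nonneg_left step3 (by positivity)
    _ = 4 * C₂ ^ 3 * V c ^ 2 / c := by ring
end

section
/- Let V : (0,∞) → (0,∞) be such that M(r) = V(r)²/r² is non-increasing and strictly positive. Let D ⊂ ℝ be a union of k disjoint bounded open intervals with diam(D) ≤ R, let δ_z = dist(z, Dᶜ), and let b : ℝ → ℝ be measurable. Set K_R = sup_{x∈ℝ} ∫_{B(x,R)} M(|x−z|) |b(z)| dz. Then for every y ∈ D: ∫_D M( δ_z ∧ |y−z| ) |b(z)| dz ≤ (2k+1) · K_R. -/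
open MeasureTheory Metric ENNReal

/-- For D a union of k disjoint bounded open intervals with diam(D) ≤ R
and M = V²/r² non-increasing and positive,
∫_D M(δ_z ∧ |y−z|)|b(z)| dz ≤ (2k+1)·K_R with K_R = sup_x ∫_{B(x,R)} M(|x−z|)|b(z)| dz. -/
theorem statement17 (V M : ℝ → ℝ)
    (hM : ∀ r : ℝ, 0 < r → M r = V r ^ 2 / r ^ 2)
    (hMpos : ∀ r : ℝ, 0 < r → 0 < M r)
    (hMdec : ∀ r s : ℝ, 0 < r → r ≤ s → M s ≤ M r)
    (k : ℕ) (p q : Fin k → ℝ) (hpq : ∀ i, p i < q i)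
    (hdisj : ∀ i j : Fin k, i < j → q i ≤ p j)
    (D : Set ℝ) (hD : D = ⋃ i, Set.Ioo (p i) (q i))
    (R : ℝ) (hdiam : Metric.diam D ≤ R)
    (b : ℝ → ℝ) (hb : Measurable b) :
    ∀ y ∈ D,
      (∫⁻ z in D, ENNReal.ofReal (M (min (infDist z Dᶜ) |y - z|) * |b z|)) ≤
        ((2 * k + 1 : ℕ) : ℝ≥0∞) *
          ⨆ x : ℝ, ∫⁻ z in Set.Ioo (x - R) (x + R),
            ENNReal.ofReal (M |x - z| * |b z|) := by
  intro y hy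
  -- notation
  set K : ℝ≥0∞ := ⨆ x : ℝ, ∫⁻ z in Set.Ioo (x - R) (x + R),
      ENNReal.ofReal (M |x - z| * |b z|) with hK
  set f : ℝ → ℝ≥0∞ := fun z => ENNReal.ofReal (M (min (infDist z Dᶜ) |y - z|) * |b z|)
    with hf
  obtain ⟨i0, hi0⟩ := Set.mem_iUnion.mp (hD ▸ hy)
  have hDsub : ∀ i, Set.Ioo (p i) (q i) ⊆ D := by
    intro i z hz; rw [hD]; exact Set.mem_iUnion.mpr ⟨i, hz⟩
  have hbdd : Bornology.IsBounded D := by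
    rw [hD]
    exact Bornology.isBounded_iUnion.mpr fun i => Metric.isBounded_Ioo _ _
  have hlen : ∀ i, q i - p i ≤ R := by
    intro i
    have h1 : Metric.diam (Set.Ioo (p i) (q i)) ≤ Metric.diam D :=
      Metric.diam_mono (hDsub i) hbdd
    rw [Real.diam_Ioo (le_of_lt (hpq i))] at h1
    linarith
  have hR : 0 < R := lt_of_lt_of_le (sub_pos.mpr (hpq i0)) (hlen i0)
  have hqD : ∀ i, q i ∉ D := by
    intro i hmem
    rw [hD] at hmem
    obtain ⟨j, hj⟩ := Set.mem_iUnion.mp hmem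
    rcases lt_trichotomy i j with h | h | h
    · have := hdisj i j h; have := hj.1; linarith
    · subst h; exact lt_irrefl _ hj.2
    · have := hdisj j i h; have := hpq i; have := hj.2; linarith
  have hpD : ∀ i, p i ∉ D := by
    intro i hmem
    rw [hD] at hmem
    obtain ⟨j, hj⟩ := Set.mem_iUnion.mp hmem
    rcases lt_trichotomy i j with h | h | h
    · have := hdisj i j h; have := hpq i; have := hj.1; linarith
    · subst h; exact lt_irrefl _ hj.1
    · have := hdisj j i h; have := hj.2; linarith
  have hcne : Dᶜ.Nonempty := ⟨q i0, hqD i0⟩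
  -- lower bound for distance to the complement inside an interval
  have hδlow : ∀ i, ∀ z ∈ Set.Ioo (p i) (q i),
      min (z - p i) (q i - z) ≤ infDist z Dᶜ := by
    intro i z hz
    by_contra hlt
    push_neg at hlt
    obtain ⟨w, hw, hd⟩ := (Metric.infDist_lt_iff hcne).mp hlt
    have hw' : w ∉ Set.Ioo (p i) (q i) := fun h => hw (hDsub i h)
    rw [Set.mem_Ioo, not_and_or, not_lt, not_lt] at hw'
    rw [Real.dist_eq] at hd
    rcases hw' with h | h
    · have h1 : min (z - p i) (q i - z) ≤ z - p i := min_le_left _ _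
      have h2 : z - w ≤ |z - w| := le_abs_self _
      linarith
    · have h1 : min (z - p i) (q i - z) ≤ q i - z := min_le_right _ _
      have h2 : -(z - w) ≤ |z - w| := neg_le_abs _
      linarith
  set A : Set ℝ := {z | |y - z| ≤ infDist z Dᶜ} with hA
  have hAmeas : MeasurableSet A := by
    have : IsClosed A :=
      isClosed_le (by fun_prop) (Metric.continuous_infDist_pt _)
    exact this.measurableSet
  have hDmeas : MeasurableSet D := by
    rw [hD]
    exact MeasurableSet.iUnion fun i => measurableSet_Ioo
  -- Term 1 : the near part
  have hterm1 : (∫⁻ z in D ∩ A, f z) ≤ K := by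
    have hsub : D ∩ A ⊆ Set.Ioo (y - R) (y + R) := by
      rintro z ⟨hzD, hzA⟩
      obtain ⟨i, hzi⟩ := Set.mem_iUnion.mp (hD ▸ hzD)
      have h1 : infDist z Dᶜ ≤ dist z (p i) := infDist_le_dist_of_mem (hpD i)
      have h2 : infDist z Dᶜ ≤ dist z (q i) := infDist_le_dist_of_mem (hqD i)
      rw [Real.dist_eq, abs_of_pos (by linarith [hzi.1, hzi.2] : (0:ℝ) < z - p i)] at h1
      rw [Real.dist_eq, abs_of_neg (by linarith [hzi.1, hzi.2] : z - q i < 0)] at h2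
      have hAz : |y - z| ≤ infDist z Dᶜ := hzA
      have hlen' := hlen i
      have habs : |y - z| < R := by
        have : 2 * |y - z| ≤ (z - p i) + (q i - z) := by linarith
        have : 2 * |y - z| ≤ R := by linarith
        linarith
      have := abs_lt.mp habs
      constructor <;> [linarith [this.1]; linarith [this.2]]
    calc (∫⁻ z in D ∩ A, f z)
        ≤ ∫⁻ z in D ∩ A, ENNReal.ofReal (M |y - z| * |b z|) := by
          apply setLIntegral_mono' (hDmeas.inter hAmeas)
          rintro z ⟨_, hzA⟩
          have h0 : min (infDist z Dᶜ) |y - z| = |y - z| := min_eq_right hzA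
          show ENNReal.ofReal (M (min (infDist z Dᶜ) |y - z|) * |b z|) ≤ _
          rw [h0]
      _ ≤ ∫⁻ z in Set.Ioo (y - R) (y + R), ENNReal.ofReal (M |y - z| * |b z|) :=
          lintegral_mono_set hsub
      _ ≤ K := le_iSup (fun x : ℝ => ∫⁻ z in Set.Ioo (x - R) (x + R),
            ENNReal.ofReal (M |x - z| * |b z|)) y
  -- Term 2 : the far part, interval by interval
  have hterm2 : (∫⁻ z in D ∩ Aᶜ, f z) ≤ (2 * k : ℕ) * K := by
    have hun : D ∩ Aᶜ = ⋃ i, (Set.Ioo (p i) (q i) ∩ Aᶜ) := by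
      rw [hD, Set.iUnion_inter]
    rw [hun]
    refine le_trans (lintegral_iUnion_le _ _) ?_
    have hpiece : ∀ i : Fin k, (∫⁻ z in Set.Ioo (p i) (q i) ∩ Aᶜ, f z) ≤ K + K := by
      intro i
      set L : Set ℝ := {z | z - p i ≤ q i - z} with hL
      have hLmeas : MeasurableSet L := by
        have : IsClosed L := isClosed_le (by fun_prop) (by fun_prop)
        exact this.measurableSet
      have hImeas : MeasurableSet (Set.Ioo (p i) (q i) ∩ Aᶜ) :=
        measurableSet_Ioo.inter hAmeas.compl
      -- pointwise bound on the left piece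
      have hleft : (∫⁻ z in Set.Ioo (p i) (q i) ∩ Aᶜ ∩ L, f z) ≤ K := by
        calc (∫⁻ z in Set.Ioo (p i) (q i) ∩ Aᶜ ∩ L, f z)
            ≤ ∫⁻ z in Set.Ioo (p i) (q i) ∩ Aᶜ ∩ L,
                ENNReal.ofReal (M |p i - z| * |b z|) := by
              apply setLIntegral_mono' (hImeas.inter hLmeas)
              rintro z ⟨⟨hzi, hzA⟩, hzL⟩
              have hzA' : infDist z Dᶜ < |y - z| := lt_of_not_ge hzA
              have hδ := hδlow i z hzi
              have hmin : min (z - p i) (q i - z) = z - p i := min_eq_left hzL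
              rw [hmin] at hδ
              have hpos : (0:ℝ) < z - p i := sub_pos.mpr hzi.1
              have harg : z - p i ≤ min (infDist z Dᶜ) |y - z| := by
                apply le_min hδ (le_of_lt (lt_of_le_of_lt hδ hzA'))
              have hMle : M (min (infDist z Dᶜ) |y - z|) ≤ M (z - p i) :=
                hMdec _ _ hpos harg
              have habs : |p i - z| = z - p i := by
                rw [abs_sub_comm, abs_of_pos hpos]
              rw [hf, habs]
              exact ENNReal.ofReal_le_ofReal
                (mul_le_mul_of_nonneg_right hMle (abs_nonneg _))
          _ ≤ ∫⁻ z in Set.Ioo (p i - R) (p i + R),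
                ENNReal.ofReal (M |p i - z| * |b z|) := by
              apply lintegral_mono_set
              rintro z ⟨⟨hzi, _⟩, _⟩
              exact ⟨by linarith [hzi.1], by linarith [hzi.2, hlen i]⟩
          _ ≤ K := le_iSup (fun x : ℝ => ∫⁻ z in Set.Ioo (x - R) (x + R),
                ENNReal.ofReal (M |x - z| * |b z|)) (p i)
      have hright : (∫⁻ z in Set.Ioo (p i) (q i) ∩ Aᶜ ∩ Lᶜ, f z) ≤ K := by
        calc (∫⁻ z in Set.Ioo (p i) (q i) ∩ Aᶜ ∩ Lᶜ, f z)
            ≤ ∫⁻ z in Set.Ioo (p i) (q i) ∩ Aᶜ ∩ Lᶜ,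
                ENNReal.ofReal (M |q i - z| * |b z|) := by
              apply setLIntegral_mono' (hImeas.inter hLmeas.compl)
              rintro z ⟨⟨hzi, hzA⟩, hzL⟩
              have hzA' : infDist z Dᶜ < |y - z| := lt_of_not_ge hzA
              have hzL' : q i - z ≤ z - p i := le_of_lt (lt_of_not_ge hzL)
              have hδ := hδlow i z hzi
              have hmin : min (z - p i) (q i - z) = q i - z := min_eq_right hzL'
              rw [hmin] at hδ
              have hpos : (0:ℝ) < q i - z := sub_pos.mpr hzi.2
              have harg : q i - z ≤ min (infDist z Dᶜ) |y - z| :=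
                le_min hδ (le_of_lt (lt_of_le_of_lt hδ hzA'))
              have hMle : M (min (infDist z Dᶜ) |y - z|) ≤ M (q i - z) :=
                hMdec _ _ hpos harg
              have habs : |q i - z| = q i - z := abs_of_pos hpos
              rw [hf, habs]
              exact ENNReal.ofReal_le_ofReal
                (mul_le_mul_of_nonneg_right hMle (abs_nonneg _))
          _ ≤ ∫⁻ z in Set.Ioo (q i - R) (q i + R),
                ENNReal.ofReal (M |q i - z| * |b z|) := by
              apply lintegral_mono_set
              rintro z ⟨⟨hzi, _⟩, _⟩
              exact ⟨by linarith [hzi.1, hlen i], by linarith [hzi.2]⟩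
          _ ≤ K := le_iSup (fun x : ℝ => ∫⁻ z in Set.Ioo (x - R) (x + R),
                ENNReal.ofReal (M |x - z| * |b z|)) (q i)
      calc (∫⁻ z in Set.Ioo (p i) (q i) ∩ Aᶜ, f z)
          ≤ ∫⁻ z in (Set.Ioo (p i) (q i) ∩ Aᶜ ∩ L) ∪
              (Set.Ioo (p i) (q i) ∩ Aᶜ ∩ Lᶜ), f z := by
            apply lintegral_mono_set
            intro z hz
            by_cases hzL : z ∈ L
            · exact Or.inl ⟨hz, hzL⟩
            · exact Or.inr ⟨hz, hzL⟩
        _ ≤ (∫⁻ z in Set.Ioo (p i) (q i) ∩ Aᶜ ∩ L, f z) +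
              ∫⁻ z in Set.Ioo (p i) (q i) ∩ Aᶜ ∩ Lᶜ, f z :=
            lintegral_union_le _ _ _
        _ ≤ K + K := add_le_add hleft hright
    calc (∑' i : Fin k, ∫⁻ z in Set.Ioo (p i) (q i) ∩ Aᶜ, f z)
        ≤ ∑' _i : Fin k, (K + K) := ENNReal.tsum_le_tsum hpiece
      _ = (k : ℕ) • (K + K) := by
          rw [tsum_fintype]
          simp [Finset.sum_const, Finset.card_univ]
      _ = (2 * k : ℕ) * K := by
          rw [nsmul_eq_mul]
          push_cast
          ring
  calc (∫⁻ z in D, f z)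
      ≤ ∫⁻ z in (D ∩ A) ∪ (D ∩ Aᶜ), f z := by
        apply lintegral_mono_set
        intro z hz
        by_cases hzA : z ∈ A
        · exact Or.inl ⟨hz, hzA⟩
        · exact Or.inr ⟨hz, hzA⟩
    _ ≤ (∫⁻ z in D ∩ A, f z) + ∫⁻ z in D ∩ Aᶜ, f z := lintegral_union_le _ _ _
    _ ≤ K + (2 * k : ℕ) * K := add_le_add hterm1 hterm2
    _ ≤ ((2 * k + 1 : ℕ) : ℝ≥0∞) * K := by
        apply le_of_eq
        push_cast
        ring
end

section
/- Let (D, μ) be a measure space, and let G, u, m : D × D → [0,∞) be measurable with u bounded, say u ≤ B everywhere for a constant B < ∞. Suppose there are constants 0 ≤ κ < 1 and 0 ≤ η < 1 such that for all x, y ∈ D: (i) u(x,y) ≤ G(x,y) + ∫_D u(x,z) m(z,y) μ(dz); (ii) ∫_D G(x,z) m(z,y) μ(dz) ≤ κ G(x,y); (iii) ∫_D m(z,y) μ(dz) ≤ η for every y. Then u(x,y) ≤ G(x,y)/(1−κ) for all x, y ∈ D. If in addition u(x,y) ≥ G(x,y) − ∫_D u(x,z) m(z,y) μ(dz) for all x,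 y ∈ D, then also u(x,y) ≥ (1 − κ/(1−κ)) G(x,y) for all x, y ∈ D. -/
open MeasureTheory

/-- Abstract iteration scheme for the perturbation formula. If
u ≤ G + ∫ u·m dμ, ∫ G·m dμ ≤ κG (κ < 1), ∫ m dμ ≤ η < 1 and u ≤ B, then
u ≤ G/(1−κ); if moreover u ≥ G − ∫ u·m dμ, then u ≥ (1 − κ/(1−κ))·G.
(All functions are nonnegative; the integral inequalities are stated with the
Lebesgue integral of the nonnegative integrands.) -/
theorem statement18 {X : Type*} [MeasurableSpace X] (μ : Measure X)
    (G u m : X → X → ℝ)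
    (hGmeas : Measurable (Function.uncurry G))
    (humeas : Measurable (Function.uncurry u))
    (hmmeas : Measurable (Function.uncurry m))
    (hGnn : ∀ x y, 0 ≤ G x y) (hunn : ∀ x y, 0 ≤ u x y) (hmnn : ∀ x y, 0 ≤ m x y)
    (B : ℝ) (huB : ∀ x y, u x y ≤ B)
    (κ η : ℝ) (hκ0 : 0 ≤ κ) (hκ1 : κ < 1) (hη0 : 0 ≤ η) (hη1 : η < 1)
    (hi : ∀ x y, ENNReal.ofReal (u x y) ≤
      ENNReal.ofReal (G x y) + ∫⁻ z, ENNReal.ofReal (u x z * m z y) ∂μ)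
    (hii : ∀ x y, (∫⁻ z, ENNReal.ofReal (G x z * m z y) ∂μ) ≤ ENNReal.ofReal (κ * G x y))
    (hiii : ∀ y, (∫⁻ z, ENNReal.ofReal (m z y) ∂μ) ≤ ENNReal.ofReal η) :
    (∀ x y, u x y ≤ G x y / (1 - κ)) ∧
      ((∀ x y, ENNReal.ofReal (G x y) ≤
          ENNReal.ofReal (u x y) + ∫⁻ z, ENNReal.ofReal (u x z * m z y) ∂μ) →
        ∀ x y, (1 - κ / (1 - κ)) * G x y ≤ u x y) := by
  rcases isEmpty_or_nonempty X with hX | hX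
  · exact ⟨fun x => (IsEmpty.elim hX x), fun _ x => (IsEmpty.elim hX x)⟩
  obtain ⟨x0⟩ := hX
  have hB : 0 ≤ B := le_trans (hunn x0 x0) (huB x0 x0)
  have h1κ : (0:ℝ) < 1 - κ := by linarith
  set S : ℕ → ℝ := fun n => ∑ i ∈ Finset.range n, κ ^ i with hS
  have hSnn : ∀ n, 0 ≤ S n := fun n => Finset.sum_nonneg fun i _ => pow_nonneg hκ0 i
  have hSle : ∀ n, S n ≤ 1 / (1 - κ) := by
    intro n
    rw [le_div_iff₀ h1κ]
    have key : S n * (κ - 1) = κ ^ n - 1 := geom_sum_mul κ n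
    nlinarith [pow_nonneg hκ0 n]
  -- measurability of sections
  have hGsec : ∀ x, Measurable (fun z => G x z) :=
    fun x => hGmeas.comp (measurable_prodMk_left)
  have hmsec : ∀ y, Measurable (fun z => m z y) :=
    fun y => hmmeas.comp (measurable_prodMk_right)
  have main : ∀ n x y, u x y ≤ S n * G x y + η ^ n * B := by
    intro n
    induction n with
    | zero =>
      intro x y
      simpa [hS] using huB x y
    | succ n ih =>
      intro x y
      have hpt : ∀ z, ENNReal.ofReal (u x z * m z y) ≤
          ENNReal.ofReal (S n * (G x z * m z y)) + ENNReal.ofReal (η ^ n * B * m z y) := by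
        intro z
        rw [← ENNReal.ofReal_add
          (mul_nonneg (hSnn n) (mul_nonneg (hGnn x z) (hmnn z y)))
          (mul_nonneg (mul_nonneg (pow_nonneg hη0 n) hB) (hmnn z y))]
        apply ENNReal.ofReal_le_ofReal
        have h1 := mul_le_mul_of_nonneg_right (ih x z) (hmnn z y)
        nlinarith [h1]
      have hmeas1 : Measurable (fun z => ENNReal.ofReal (S n * (G x z * m z y))) :=
        (measurable_const.mul ((hGsec x).mul (hmsec y))).ennreal_ofReal
      have hint : (∫⁻ z, ENNReal.ofReal (u x z * m z y) ∂μ)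
          ≤ ENNReal.ofReal (S n * (κ * G x y)) + ENNReal.ofReal (η ^ n * B * η) := by
        calc (∫⁻ z, ENNReal.ofReal (u x z * m z y) ∂μ)
            ≤ ∫⁻ z, (ENNReal.ofReal (S n * (G x z * m z y))
                + ENNReal.ofReal (η ^ n * B * m z y)) ∂μ := lintegral_mono hpt
          _ = (∫⁻ z, ENNReal.ofReal (S n * (G x z * m z y)) ∂μ)
                + ∫⁻ z, ENNReal.ofReal (η ^ n * B * m z y) ∂μ :=
              lintegral_add_left hmeas1 _
          _ ≤ ENNReal.ofReal (S n * (κ * G x y)) + ENNReal.ofReal (η ^ n * B * η) := by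
              gcongr
              · calc (∫⁻ z, ENNReal.ofReal (S n * (G x z * m z y)) ∂μ)
                    = ENNReal.ofReal (S n) * ∫⁻ z, ENNReal.ofReal (G x z * m z y) ∂μ := by
                      simp_rw [ENNReal.ofReal_mul (hSnn n)]
                      exact lintegral_const_mul' _ _ ENNReal.ofReal_ne_top
                  _ ≤ ENNReal.ofReal (S n) * ENNReal.ofReal (κ * G x y) := by
                      gcongr; exact hii x y
                  _ = ENNReal.ofReal (S n * (κ * G x y)) :=
                      (ENNReal.ofReal_mul (hSnn n)).symm
              · calc (∫⁻ z, ENNReal.ofReal (η ^ n * B * m z y) ∂μ)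
                    = ENNReal.ofReal (η ^ n * B) * ∫⁻ z, ENNReal.ofReal (m z y) ∂μ := by
                      simp_rw [ENNReal.ofReal_mul (mul_nonneg (pow_nonneg hη0 n) hB)]
                      exact lintegral_const_mul' _ _ ENNReal.ofReal_ne_top
                  _ ≤ ENNReal.ofReal (η ^ n * B) * ENNReal.ofReal η := by
                      gcongr; exact hiii y
                  _ = ENNReal.ofReal (η ^ n * B * η) :=
                      (ENNReal.ofReal_mul (mul_nonneg (pow_nonneg hη0 n) hB)).symm
      have hfin : ENNReal.ofReal (u x y) ≤
          ENNReal.ofReal (G x y + (S n * (κ * G x y) + η ^ n * B * η)) := by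
        rw [ENNReal.ofReal_add (hGnn x y)
          (add_nonneg (mul_nonneg (hSnn n) (mul_nonneg hκ0 (hGnn x y)))
            (mul_nonneg (mul_nonneg (pow_nonneg hη0 n) hB) hη0)),
          ENNReal.ofReal_add (mul_nonneg (hSnn n) (mul_nonneg hκ0 (hGnn x y)))
          (mul_nonneg (mul_nonneg (pow_nonneg hη0 n) hB) hη0)]
        calc ENNReal.ofReal (u x y)
            ≤ ENNReal.ofReal (G x y) + ∫⁻ z, ENNReal.ofReal (u x z * m z y) ∂μ := hi x y
          _ ≤ _ := by gcongr
      have hreal : u x y ≤ G x y + (S n * (κ * G x y) + η ^ n * B * η) :=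
        (ENNReal.ofReal_le_ofReal_iff
          (add_nonneg (hGnn x y)
            (add_nonneg (mul_nonneg (hSnn n) (mul_nonneg hκ0 (hGnn x y)))
              (mul_nonneg (mul_nonneg (pow_nonneg hη0 n) hB) hη0)))).mp hfin
      have hrec : S (n + 1) = κ * S n + 1 := by
        simp only [hS]
        rw [geom_sum_succ]
      rw [hrec]
      have hring : (κ * S n + 1) * G x y + η ^ (n + 1) * B
          = G x y + (S n * (κ * G x y) + η ^ n * B * η) := by ring
      linarith [hreal, hring]
  have upper : ∀ x y, u x y ≤ G x y / (1 - κ) := by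
    intro x y
    have h2 : ∀ n : ℕ, u x y ≤ G x y / (1 - κ) + η ^ n * B := by
      intro n
      have h3 := mul_le_mul_of_nonneg_right (hSle n) (hGnn x y)
      have h4 : (1 / (1 - κ)) * G x y = G x y / (1 - κ) := by ring
      have := main n x y
      linarith
    have htend : Filter.Tendsto (fun n : ℕ => G x y / (1 - κ) + η ^ n * B)
        Filter.atTop (nhds (G x y / (1 - κ) + 0 * B)) :=
      Filter.Tendsto.const_add _
        ((tendsto_pow_atTop_nhds_zero_of_lt_one hη0 hη1).mul_const B)
    have := ge_of_tendsto' htend h2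
    linarith
  refine ⟨upper, fun hlo x y => ?_⟩
  have hint : (∫⁻ z, ENNReal.ofReal (u x z * m z y) ∂μ)
      ≤ ENNReal.ofReal (κ / (1 - κ) * G x y) := by
    calc (∫⁻ z, ENNReal.ofReal (u x z * m z y) ∂μ)
        ≤ ∫⁻ z, ENNReal.ofReal ((1 / (1 - κ)) * (G x z * m z y)) ∂μ := by
          apply lintegral_mono
          intro z
          apply ENNReal.ofReal_le_ofReal
          have h1 := mul_le_mul_of_nonneg_right (upper x z) (hmnn z y)
          have h2 : G x z / (1 - κ) * m z y = (1 / (1 - κ)) * (G x z * m z y) := by ring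
          linarith
      _ = ENNReal.ofReal (1 / (1 - κ)) * ∫⁻ z, ENNReal.ofReal (G x z * m z y) ∂μ := by
          simp_rw [ENNReal.ofReal_mul (by positivity : (0:ℝ) ≤ 1 / (1 - κ))]
          exact lintegral_const_mul' _ _ ENNReal.ofReal_ne_top
      _ ≤ ENNReal.ofReal (1 / (1 - κ)) * ENNReal.ofReal (κ * G x y) := by
          gcongr; exact hii x y
      _ = ENNReal.ofReal (κ / (1 - κ) * G x y) := by
          rw [← ENNReal.ofReal_mul (by positivity : (0:ℝ) ≤ 1 / (1 - κ))]
          ring_nf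
  have hfin : ENNReal.ofReal (G x y) ≤ ENNReal.ofReal (u x y + κ / (1 - κ) * G x y) := by
    rw [ENNReal.ofReal_add (hunn x y) (mul_nonneg (div_nonneg hκ0 h1κ.le) (hGnn x y))]
    calc ENNReal.ofReal (G x y)
        ≤ ENNReal.ofReal (u x y) + ∫⁻ z, ENNReal.ofReal (u x z * m z y) ∂μ := hlo x y
      _ ≤ _ := by gcongr
  have hreal : G x y ≤ u x y + κ / (1 - κ) * G x y :=
    (ENNReal.ofReal_le_ofReal_iff
      (add_nonneg (hunn x y) (mul_nonneg (div_nonneg hκ0 h1κ.le) (hGnn x y)))).mp hfin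
  linarith
end
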